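/- arXiv:2509.16974 — 7 statements merged into one kernel-verified Lean document; each statement's English description precedes it below -/
import Mathlib

section
/- Let (κ_n)_{n≥1} be a non-increasing sequence of nonnegative reals with κ_1 > 0 and Σ := ∑_{n≥1} κ_n < ∞, and let (X_n)_{n≥1} be independent real random variables on a probability space with X_n distributed as N(0,κ_n). Set Y = ∑_{n≥1} X_n² (an almost surely convergent sum of nonnegative terms with E[Y] = Σ). Suppose t_1 > 0 and a ∈ ℝ satisfy 2κ_1 t_1 < 1 and −(1/2)·log(1 − 2κ_1 t_1) ≤ a·κ_1·t_1. Then for every t ∈ [0, t_1], the moment generating function satisfies E[exp(t·Y)] ≤ exp(a·t·Σ). -/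
open MeasureTheory ProbabilityTheory Real

lemma aux_log_bound {s₁ a : ℝ} (hs₁ : 0 < s₁) (h1 : 2 * s₁ < 1)
    (ha : -(1/2 : ℝ) * Real.log (1 - 2 * s₁) ≤ a * s₁) :
    ∀ s : ℝ, 0 ≤ s → s ≤ s₁ → -(1/2 : ℝ) * Real.log (1 - 2 * s) ≤ a * s := by
  intro s hs0 hss
  set l : ℝ := s / s₁ with hl
  have hl0 : 0 ≤ l := div_nonneg hs0 hs₁.le
  have hl1 : l ≤ 1 := (div_le_one hs₁).mpr hss
  have hsl : s = l * s₁ := by rw [hl, div_mul_cancel₀ s hs₁.ne']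
  set A : ℝ →ᵃ[ℝ] ℝ := AffineMap.lineMap (1 : ℝ) (1 - 2 * s₁) with hA
  have hAx : ∀ x : ℝ, A x = 1 - 2 * s₁ * x := by
    intro x
    simp [hA, AffineMap.lineMap_apply]
    ring
  have hconc : ConcaveOn ℝ (A ⁻¹' Set.Ioi 0) (Real.log ∘ A) :=
    (strictConcaveOn_log_Ioi.concaveOn).comp_affineMap A
  have h0mem : (0 : ℝ) ∈ A ⁻¹' Set.Ioi 0 := by
    simp [Set.mem_preimage, hAx]
  have h1mem : (1 : ℝ) ∈ A ⁻¹' Set.Ioi 0 := by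
    simp only [Set.mem_preimage, hAx, Set.mem_Ioi]; linarith
  have hkey := hconc.2 h1mem h0mem hl0 (by linarith : (0:ℝ) ≤ 1 - l) (by ring)
  simp only [Function.comp_apply, smul_eq_mul, mul_one, mul_zero, add_zero] at hkey
  rw [hAx, hAx, hAx] at hkey
  simp only [mul_one, mul_zero, sub_zero, Real.log_one, mul_zero, add_zero] at hkey
  -- hkey : l * log (1 - 2*s₁) ≤ log (1 - 2*s₁*l)
  have hls : 1 - 2 * s₁ * l = 1 - 2 * s := by rw [hsl]; ring
  rw [hls] at hkey
  have : -(1/2 : ℝ) * Real.log (1 - 2 * s) ≤ l * (-(1/2 : ℝ) * Real.log (1 - 2 * s₁)) := by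
    nlinarith
  calc -(1/2 : ℝ) * Real.log (1 - 2 * s) ≤ l * (-(1/2 : ℝ) * Real.log (1 - 2 * s₁)) := this
    _ ≤ l * (a * s₁) := by
        exact mul_le_mul_of_nonneg_left ha hl0
    _ = a * s := by rw [hsl]; ring

lemma aux_gauss_sq (v : NNReal) {t : ℝ} (h : 2 * (v : ℝ) * t < 1) :
    Integrable (fun x => Real.exp (t * x ^ 2)) (gaussianReal 0 v) ∧
    ∫ x, Real.exp (t * x ^ 2) ∂(gaussianReal 0 v) = (Real.sqrt (1 - 2 * (v : ℝ) * t))⁻¹ := by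
  rcases eq_or_ne v 0 with hv | hv
  · subst hv
    rw [gaussianReal_zero_var]
    constructor
    · exact (integrable_const (Real.exp (t * (0:ℝ) ^ 2))).congr
        (MeasureTheory.ae_eq_dirac (fun x : ℝ => Real.exp (t * x ^ 2))).symm
    · rw [integral_dirac]
      norm_num
  · have hvr : (0 : ℝ) < v := by positivity
    set b : ℝ := (1 - 2 * (v : ℝ) * t) / (2 * v) with hb
    have hb0 : 0 < b := by
      apply div_pos (by linarith) (by linarith)
    have hkey : ∀ x : ℝ, ((gaussianPDFReal 0 v x).toNNReal : ℝ) • Real.exp (t * x ^ 2)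
        = (Real.sqrt (2 * π * v))⁻¹ * Real.exp (-b * x ^ 2) := by
      intro x
      rw [smul_eq_mul, Real.coe_toNNReal _ (gaussianPDFReal_nonneg 0 v x), gaussianPDFReal]
      rw [mul_assoc, ← Real.exp_add]
      congr 2
      rw [hb]
      field_simp
      ring
    have hdens : gaussianReal 0 v
        = volume.withDensity fun x => ((gaussianPDFReal 0 v x).toNNReal : ENNReal) := by
      rw [gaussianReal_of_var_ne_zero 0 hv]
      rfl
    have hmeas : Measurable fun x => (gaussianPDFReal 0 v x).toNNReal :=
      (measurable_gaussianPDFReal 0 v).real_toNNReal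
    have hInt : Integrable (fun x => Real.exp (t * x ^ 2)) (gaussianReal 0 v) := by
      rw [hdens, integrable_withDensity_iff_integrable_coe_smul hmeas]
      exact ((integrable_exp_neg_mul_sq hb0).const_mul ((Real.sqrt (2 * π * v))⁻¹)).congr
        (Filter.Eventually.of_forall fun x => (hkey x).symm)
    refine ⟨hInt, ?_⟩
    rw [hdens, integral_withDensity_eq_integral_smul hmeas]
    calc ∫ x, (gaussianPDFReal 0 v x).toNNReal • Real.exp (t * x ^ 2)
        = ∫ x, (Real.sqrt (2 * π * v))⁻¹ * Real.exp (-b * x ^ 2) := by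
          congr 1; funext x; exact hkey x
      _ = (Real.sqrt (2 * π * v))⁻¹ * ∫ x, Real.exp (-b * x ^ 2) := integral_const_mul _ _
      _ = (Real.sqrt (2 * π * v))⁻¹ * Real.sqrt (π / b) := by rw [integral_gaussian]
      _ = (Real.sqrt (1 - 2 * (v : ℝ) * t))⁻¹ := by
          have h1 : π / b = (2 * π * v) / (1 - 2 * (v : ℝ) * t) := by
            rw [hb]; field_simp
          rw [h1, Real.sqrt_div (by positivity)]
          have h2 : Real.sqrt (2 * π * v) ≠ 0 := by positivity
          field_simp

/-- MGF bound for the squared L² norm `Y = ∑ₙ Xₙ²` of a Gaussian process with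
Karhunen–Loève variances `κₙ` (here indexed by `n : ℕ`, with `κ 0` playing the role of `κ₁`):
if `2 κ₁ t₁ < 1` and `-(1/2) log(1 - 2 κ₁ t₁) ≤ a κ₁ t₁`, then for all `t ∈ [0, t₁]`,
`E[exp (t Y)] ≤ exp (a t Σ)` where `Σ = ∑ₙ κₙ`. -/
theorem mgf_bound_sum_sq_gaussians
    {Ω : Type*} [MeasurableSpace Ω] (P : Measure Ω) [IsProbabilityMeasure P]
    (κ : ℕ → NNReal) (hmono : Antitone κ) (hκ1 : 0 < κ 0)
    (hsum : Summable fun n => (κ n : ℝ))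
    (X : ℕ → Ω → ℝ) (hXmeas : ∀ n, Measurable (X n))
    (hindep : iIndepFun X P)
    (hlaw : ∀ n, P.map (X n) = gaussianReal 0 (κ n))
    (t₁ a : ℝ) (ht₁ : 0 < t₁) (ht₁' : 2 * (κ 0 : ℝ) * t₁ < 1)
    (ha : -(1 / 2 : ℝ) * Real.log (1 - 2 * (κ 0 : ℝ) * t₁) ≤ a * (κ 0 : ℝ) * t₁) :
    ∀ t ∈ Set.Icc (0 : ℝ) t₁,
      ∫⁻ ω, ENNReal.ofReal (Real.exp (t * ∑' n, (X n ω) ^ 2)) ∂P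
        ≤ ENNReal.ofReal (Real.exp (a * t * ∑' n, (κ n : ℝ))) := by
  intro t ht
  obtain ⟨ht0, ht1⟩ := ht
  have hk0 : (0:ℝ) < κ 0 := by exact_mod_cast hκ1
  have ha0 : 0 < a := by
    have hu : (0:ℝ) < 1 - 2 * (κ 0:ℝ) * t₁ := by linarith
    have hu1 : 1 - 2 * (κ 0:ℝ) * t₁ < 1 := by nlinarith
    have hlog : Real.log (1 - 2 * (κ 0:ℝ) * t₁) < 0 := Real.log_neg hu hu1
    nlinarith
  have hlt : ∀ (n : ℕ) (t' : ℝ), 0 ≤ t' → t' ≤ t₁ → 2 * (κ n:ℝ) * t' < 1 := by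
    intro n t' h0 h1
    have hκn : (κ n:ℝ) ≤ κ 0 := by exact_mod_cast hmono (Nat.zero_le n)
    have hκn0 : (0:ℝ) ≤ κ n := (κ n).coe_nonneg
    nlinarith
  have hfac : ∀ (n : ℕ) (t' : ℝ), 0 ≤ t' → t' ≤ t₁ →
      (Real.sqrt (1 - 2 * (κ n:ℝ) * t'))⁻¹ ≤ Real.exp (a * ((κ n:ℝ) * t')) := by
    intro n t' h0 h1
    have h2 := hlt n t' h0 h1
    have hu : (0:ℝ) < 1 - 2 * (κ n:ℝ) * t' := by linarith
    have hκn : (κ n:ℝ) ≤ κ 0 := by exact_mod_cast hmono (Nat.zero_le n)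
    have hκn0 : (0:ℝ) ≤ κ n := (κ n).coe_nonneg
    have hlogle : -(1/2:ℝ) * Real.log (1 - 2 * ((κ n:ℝ) * t')) ≤ a * ((κ n:ℝ) * t') := by
      have ha' : -(1/2:ℝ) * Real.log (1 - 2 * ((κ 0:ℝ) * t₁)) ≤ a * ((κ 0:ℝ) * t₁) := by
        rw [show (1 : ℝ) - 2 * ((κ 0:ℝ) * t₁) = 1 - 2 * (κ 0:ℝ) * t₁ by ring]
        calc -(1/2:ℝ) * Real.log (1 - 2 * (κ 0:ℝ) * t₁) ≤ a * (κ 0:ℝ) * t₁ := ha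
          _ = a * ((κ 0:ℝ) * t₁) := by ring
      have hs : (κ n:ℝ) * t' ≤ (κ 0:ℝ) * t₁ :=
        mul_le_mul hκn h1 h0 hk0.le
      exact aux_log_bound (s₁ := (κ 0:ℝ) * t₁) (by positivity)
        (by nlinarith) ha' _ (by positivity) hs
    have heq : (Real.sqrt (1 - 2 * (κ n:ℝ) * t'))⁻¹
        = Real.exp (-(1/2:ℝ) * Real.log (1 - 2 * (κ n:ℝ) * t')) := by
      rw [Real.sqrt_eq_rpow, Real.rpow_def_of_pos hu, ← Real.exp_neg]
      ring_nf
    rw [heq]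
    apply Real.exp_le_exp.mpr
    calc -(1/2:ℝ) * Real.log (1 - 2 * (κ n:ℝ) * t')
        = -(1/2:ℝ) * Real.log (1 - 2 * ((κ n:ℝ) * t')) := by ring_nf
      _ ≤ a * ((κ n:ℝ) * t') := hlogle
  set Z : ℕ → Ω → ℝ := fun n ω => (X n ω) ^ 2 with hZ
  have hZmeas : ∀ n, Measurable (Z n) := fun n => (hXmeas n).pow_const 2
  have hindZ : iIndepFun Z P :=
    hindep.comp (fun _ x => x ^ 2) (fun _ => measurable_id.pow_const 2)
  have hIntZ : ∀ (n : ℕ) (t' : ℝ), 0 ≤ t' → t' ≤ t₁ →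
      Integrable (fun ω => Real.exp (t' * Z n ω)) P := by
    intro n t' h0 h1
    have hg : AEStronglyMeasurable (fun x : ℝ => Real.exp (t' * x ^ 2)) (P.map (X n)) := by
      apply Measurable.aestronglyMeasurable; fun_prop
    have hI := (aux_gauss_sq (κ n) (hlt n t' h0 h1)).1
    rw [← hlaw n] at hI
    exact (integrable_map_measure hg (hXmeas n).aemeasurable).mp hI
  have hmgfZ : ∀ (n : ℕ) (t' : ℝ), 0 ≤ t' → t' ≤ t₁ →
      mgf (Z n) P t' = (Real.sqrt (1 - 2 * (κ n:ℝ) * t'))⁻¹ := by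
    intro n t' h0 h1
    have hg : AEStronglyMeasurable (fun x : ℝ => Real.exp (t' * x ^ 2)) (P.map (X n)) := by
      apply Measurable.aestronglyMeasurable; fun_prop
    have : mgf (Z n) P t' = ∫ x, Real.exp (t' * x ^ 2) ∂(P.map (X n)) := by
      rw [integral_map (hXmeas n).aemeasurable hg]
      rfl
    rw [this, hlaw n]
    exact (aux_gauss_sq (κ n) (hlt n t' h0 h1)).2
  -- bound for partial sums
  have hN : ∀ (t' : ℝ), 0 ≤ t' → t' ≤ t₁ → ∀ N : ℕ,
      ∫⁻ ω, ENNReal.ofReal (Real.exp (t' * ∑ n ∈ Finset.range N, (X n ω) ^ 2)) ∂P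
        ≤ ENNReal.ofReal (Real.exp (a * t' * ∑' n, (κ n:ℝ))) := by
    intro t' h0 h1 N
    have hIntS : Integrable (fun ω => Real.exp (t' * (∑ n ∈ Finset.range N, Z n) ω)) P :=
      hindZ.integrable_exp_mul_sum hZmeas (fun n _ => hIntZ n t' h0 h1)
    have hfun : (fun ω => ENNReal.ofReal (Real.exp (t' * ∑ n ∈ Finset.range N, (X n ω) ^ 2)))
        = fun ω => ENNReal.ofReal (Real.exp (t' * (∑ n ∈ Finset.range N, Z n) ω)) := by
      funext ω
      rw [Finset.sum_apply]
    rw [hfun, ← ofReal_integral_eq_lintegral_ofReal hIntS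
      (Filter.Eventually.of_forall fun ω => (Real.exp_pos _).le)]
    apply ENNReal.ofReal_le_ofReal
    have hm : ∫ ω, Real.exp (t' * (∑ n ∈ Finset.range N, Z n) ω) ∂P
        = mgf (∑ n ∈ Finset.range N, Z n) P t' := rfl
    rw [hm, hindZ.mgf_sum hZmeas]
    calc ∏ n ∈ Finset.range N, mgf (Z n) P t'
        ≤ ∏ n ∈ Finset.range N, Real.exp (a * ((κ n:ℝ) * t')) := by
          apply Finset.prod_le_prod
          · intro n _
            rw [hmgfZ n t' h0 h1]
            positivity
          · intro n _
            rw [hmgfZ n t' h0 h1]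
            exact hfac n t' h0 h1
      _ = Real.exp (∑ n ∈ Finset.range N, a * ((κ n:ℝ) * t')) := by rw [Real.exp_sum]
      _ ≤ Real.exp (a * t' * ∑' n, (κ n:ℝ)) := by
          apply Real.exp_le_exp.mpr
          have h3 : ∑ n ∈ Finset.range N, a * ((κ n:ℝ) * t')
              = (a * t') * ∑ n ∈ Finset.range N, (κ n:ℝ) := by
            rw [Finset.mul_sum]
            apply Finset.sum_congr rfl
            intro n _; ring
          rw [h3]
          have hle := Summable.sum_le_tsum (Finset.range N) (fun n _ => (κ n).coe_nonneg) hsum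
          have hat' : 0 ≤ a * t' := mul_nonneg ha0.le h0
          calc (a * t') * ∑ n ∈ Finset.range N, (κ n:ℝ)
              ≤ (a * t') * ∑' n, (κ n:ℝ) := mul_le_mul_of_nonneg_left hle hat'
            _ = a * t' * ∑' n, (κ n:ℝ) := rfl
  have hgmeas : ∀ (t' : ℝ) (N : ℕ), Measurable
      (fun ω => ENNReal.ofReal (Real.exp (t' * ∑ n ∈ Finset.range N, (X n ω) ^ 2))) := by
    intro t' N
    apply ENNReal.measurable_ofReal.comp
    apply Real.measurable_exp.comp
    apply Measurable.const_mul
    exact Finset.measurable_sum _ (fun n _ => (hXmeas n).pow_const 2)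
  have hgmono : ∀ (t' : ℝ), 0 ≤ t' → ∀ ω, Monotone
      (fun N => ENNReal.ofReal (Real.exp (t' * ∑ n ∈ Finset.range N, (X n ω) ^ 2))) := by
    intro t' h0 ω N M hNM
    apply ENNReal.ofReal_le_ofReal
    apply Real.exp_le_exp.mpr
    apply mul_le_mul_of_nonneg_left _ h0
    exact Finset.sum_le_sum_of_subset_of_nonneg (Finset.range_subset_range.mpr hNM)
      (fun n _ _ => sq_nonneg _)
  have hMCT : ∀ (t' : ℝ), 0 ≤ t' →
      ∫⁻ ω, ⨆ N : ℕ, ENNReal.ofReal (Real.exp (t' * ∑ n ∈ Finset.range N, (X n ω) ^ 2)) ∂P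
        = ⨆ N : ℕ, ∫⁻ ω, ENNReal.ofReal (Real.exp (t' * ∑ n ∈ Finset.range N, (X n ω) ^ 2)) ∂P := by
    intro t' h0
    exact lintegral_iSup (fun N => hgmeas t' N) (fun N M h ω => hgmono t' h0 ω h)
  -- a.e. summability
  have hsumae : ∀ᵐ ω ∂P, Summable (fun n => (X n ω) ^ 2) := by
    have hfin : ∫⁻ ω, ⨆ N : ℕ,
        ENNReal.ofReal (Real.exp (t₁ * ∑ n ∈ Finset.range N, (X n ω) ^ 2)) ∂P < ⊤ := by
      rw [hMCT t₁ ht₁.le]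
      exact lt_of_le_of_lt (iSup_le fun N => hN t₁ ht₁.le le_rfl N) ENNReal.ofReal_lt_top
    have hae := ae_lt_top (Measurable.iSup (fun N => hgmeas t₁ N)) hfin.ne
    filter_upwards [hae] with ω hω
    set B : ℝ := (⨆ N : ℕ,
        ENNReal.ofReal (Real.exp (t₁ * ∑ n ∈ Finset.range N, (X n ω) ^ 2))).toReal with hB
    have hBle : ∀ N, Real.exp (t₁ * ∑ n ∈ Finset.range N, (X n ω) ^ 2) ≤ B := by
      intro N
      have h1 : ENNReal.ofReal (Real.exp (t₁ * ∑ n ∈ Finset.range N, (X n ω) ^ 2))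
          ≤ ⨆ N : ℕ, ENNReal.ofReal (Real.exp (t₁ * ∑ n ∈ Finset.range N, (X n ω) ^ 2)) :=
        le_iSup (fun N => ENNReal.ofReal (Real.exp (t₁ * ∑ n ∈ Finset.range N, (X n ω) ^ 2))) N
      have h2 := ENNReal.toReal_mono hω.ne h1
      rwa [ENNReal.toReal_ofReal (Real.exp_pos _).le] at h2
    apply summable_of_sum_range_le (c := Real.log B / t₁) (fun n => sq_nonneg _)
    intro N
    have h2 := hBle N
    have hBpos : 0 < B := lt_of_lt_of_le (Real.exp_pos _) (hBle N)
    have h3 : t₁ * ∑ n ∈ Finset.range N, (X n ω) ^ 2 ≤ Real.log B := by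
      have := Real.log_le_log (Real.exp_pos _) h2
      rwa [Real.log_exp] at this
    rw [mul_comm] at h3
    exact (le_div_iff₀ ht₁).mpr h3
  -- pointwise a.e. identity
  have hptwise : ∀ᵐ ω ∂P, ENNReal.ofReal (Real.exp (t * ∑' n, (X n ω) ^ 2))
      = ⨆ N : ℕ, ENNReal.ofReal (Real.exp (t * ∑ n ∈ Finset.range N, (X n ω) ^ 2)) := by
    filter_upwards [hsumae] with ω hω
    have h1 : Filter.Tendsto (fun N => ∑ n ∈ Finset.range N, (X n ω) ^ 2)
        Filter.atTop (nhds (∑' n, (X n ω) ^ 2)) := hω.hasSum.tendsto_sum_nat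
    have h2 : Filter.Tendsto
        (fun N => ENNReal.ofReal (Real.exp (t * ∑ n ∈ Finset.range N, (X n ω) ^ 2)))
        Filter.atTop (nhds (ENNReal.ofReal (Real.exp (t * ∑' n, (X n ω) ^ 2)))) := by
      apply (ENNReal.continuous_ofReal.tendsto _).comp
      apply (Real.continuous_exp.tendsto _).comp
      exact h1.const_mul t
    exact tendsto_nhds_unique h2 (tendsto_atTop_iSup (fun N M h => hgmono t ht0 ω h))
  calc ∫⁻ ω, ENNReal.ofReal (Real.exp (t * ∑' n, (X n ω) ^ 2)) ∂P
      = ∫⁻ ω, ⨆ N : ℕ, ENNReal.ofReal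
          (Real.exp (t * ∑ n ∈ Finset.range N, (X n ω) ^ 2)) ∂P := lintegral_congr_ae hptwise
    _ = ⨆ N : ℕ, ∫⁻ ω, ENNReal.ofReal
          (Real.exp (t * ∑ n ∈ Finset.range N, (X n ω) ^ 2)) ∂P := hMCT t ht0
    _ ≤ ENNReal.ofReal (Real.exp (a * t * ∑' n, (κ n:ℝ))) := iSup_le fun N => hN t ht0 ht1 N
end

section
/- Let (κ_n)_{n≥1} be a non-increasing sequence of nonnegative reals with κ_1 > 0 and Σ := ∑_{n≥1} κ_n < ∞, and let (X_n)_{n≥1} be independent real random variables on a probability space with X_n distributed as N(0,κ_n). Set Y = ∑_{n≥1} X_n². Then for every real M with M² > Σ, P(Y ≥ M²) ≤ exp( −M²/(2κ_1) + Σ/(2κ_1) + (Σ/(2κ_1))·log(M²/Σ) ). -/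
open MeasureTheory ProbabilityTheory Real Filter
open scoped NNReal ENNReal Topology

/-- The integral of `exp (t x²)` against a centered Gaussian of variance `v`,
for `2 t v < 1`. -/
lemma gauss_exp_sq_aux (v : ℝ≥0) {t : ℝ} (ht : 2 * t * (v : ℝ) < 1) :
    Integrable (fun x => rexp (t * x ^ 2)) (gaussianReal 0 v) ∧
    ∫ x, rexp (t * x ^ 2) ∂(gaussianReal 0 v) = (Real.sqrt (1 - 2 * t * v))⁻¹ := by
  by_cases hv : v = 0
  · subst hv
    simp only [NNReal.coe_zero, mul_zero, sub_zero, Real.sqrt_one, inv_one]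
    rw [gaussianReal_zero_var]
    constructor
    · refine (integrable_const (rexp (t * (0:ℝ) ^ 2))).congr ?_
      rw [ae_dirac_eq]
      exact Filter.eventually_pure.2 rfl
    · rw [integral_dirac]
      norm_num
  · have hvpos : (0:ℝ) < v := lt_of_le_of_ne v.coe_nonneg (by exact_mod_cast (Ne.symm hv))
    have h1 : (0:ℝ) < 1 - 2 * t * v := by linarith
    set b : ℝ := (1 - 2 * t * v) / (2 * v) with hb_def
    have hb : 0 < b := div_pos h1 (by linarith)
    have hc : (0:ℝ) < Real.sqrt (2 * π * v) := Real.sqrt_pos.2 (by positivity)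
    have key : ∀ x : ℝ, gaussianPDFReal 0 v x * rexp (t * x ^ 2)
        = (Real.sqrt (2 * π * v))⁻¹ * rexp (-b * x ^ 2) := by
      intro x
      rw [gaussianPDFReal, mul_assoc, ← Real.exp_add]
      congr 2
      rw [hb_def]
      field_simp
      ring
    rw [gaussianReal_of_var_ne_zero 0 hv]
    have hf_meas : Measurable fun x => (gaussianPDFReal 0 v x).toNNReal :=
      (measurable_gaussianPDFReal 0 v).real_toNNReal
    have hpdf : gaussianPDF 0 v = fun x => ((gaussianPDFReal 0 v x).toNNReal : ℝ≥0∞) := rfl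
    have heq : (fun x => ((gaussianPDFReal 0 v x).toNNReal : ℝ≥0) • rexp (t * x ^ 2))
        = fun x => (Real.sqrt (2 * π * v))⁻¹ * rexp (-b * x ^ 2) := by
      funext x
      rw [NNReal.smul_def, Real.coe_toNNReal _ (gaussianPDFReal_nonneg 0 v x), smul_eq_mul, key x]
    constructor
    · rw [hpdf, integrable_withDensity_iff_integrable_smul hf_meas]
      rw [heq]
      exact (integrable_exp_neg_mul_sq hb).const_mul _
    · rw [hpdf, integral_withDensity_eq_integral_smul hf_meas, heq]
      rw [integral_const_mul, integral_gaussian]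
      have hpib : π / b = (2 * π * v) / (1 - 2 * t * v) := by
        rw [hb_def]
        field_simp
      rw [hpib, Real.sqrt_div (by positivity) _]
      rw [div_eq_mul_inv, ← mul_assoc, inv_mul_cancel₀ hc.ne', one_mul]

/-- Concavity bound: `(√(1 - a s))⁻¹ ≤ exp ((a/2) log (1-s)⁻¹)` for `0<s<1`, `0≤a≤1`. -/
lemma sqrt_inv_le_exp_aux {s a : ℝ} (hs0 : 0 < s) (hs1 : s < 1) (ha0 : 0 ≤ a) (ha1 : a ≤ 1) :
    (Real.sqrt (1 - a * s))⁻¹ ≤ rexp (a / 2 * Real.log (1 - s)⁻¹) := by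
  have h1s : 0 < 1 - s := by linarith
  have has : 0 < 1 - a * s := by nlinarith
  have hlog : a * Real.log (1 - s) ≤ Real.log (1 - a * s) := by
    have hc := (strictConcaveOn_log_Ioi.concaveOn).2 (Set.mem_Ioi.2 h1s)
      (Set.mem_Ioi.2 one_pos) ha0 (by linarith : (0:ℝ) ≤ 1 - a) (by ring)
    simpa [smul_eq_mul, Real.log_one,
      show a * (1 - s) + (1 - a) = 1 - a * s from by ring] using hc
  have hsqrt : Real.sqrt (1 - a * s) = rexp (Real.log (1 - a * s) / 2) := by
    rw [← Real.log_sqrt has.le, Real.exp_log (Real.sqrt_pos.2 has)]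
  rw [hsqrt, ← Real.exp_neg, Real.exp_le_exp, Real.log_inv]
  linarith

/-- Tail bound for the squared L² norm `Y = ∑ₙ Xₙ²` of a Gaussian process with
Karhunen–Loève variances `κₙ` (indexed by `n : ℕ`, `κ 0` playing the role of `κ₁`):
for `M² > Σ = ∑ₙ κₙ`,
`P(Y ≥ M²) ≤ exp(-M²/(2κ₁) + Σ/(2κ₁) + (Σ/(2κ₁)) log(M²/Σ))`. -/
theorem tail_bound_sum_sq_gaussians
    {Ω : Type*} [MeasurableSpace Ω] (P : Measure Ω) [IsProbabilityMeasure P]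
    (κ : ℕ → NNReal) (hmono : Antitone κ) (hκ1 : 0 < κ 0)
    (hsum : Summable fun n => (κ n : ℝ))
    (X : ℕ → Ω → ℝ) (hXmeas : ∀ n, Measurable (X n))
    (hindep : iIndepFun X P)
    (hlaw : ∀ n, P.map (X n) = gaussianReal 0 (κ n))
    (M : ℝ) (hM : (∑' n, (κ n : ℝ)) < M ^ 2) :
    P {ω | M ^ 2 ≤ ∑' n, (X n ω) ^ 2}
      ≤ ENNReal.ofReal (Real.exp (-(M ^ 2) / (2 * (κ 0 : ℝ))
          + (∑' n, (κ n : ℝ)) / (2 * (κ 0 : ℝ))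
          + ((∑' n, (κ n : ℝ)) / (2 * (κ 0 : ℝ)))
              * Real.log (M ^ 2 / ∑' n, (κ n : ℝ)))) := by
  classical
  set S : ℝ := ∑' n, (κ n : ℝ) with hS_def
  have hκ0 : (0:ℝ) < κ 0 := hκ1
  have hS_pos : (0:ℝ) < S :=
    lt_of_lt_of_le hκ0 (Summable.le_tsum hsum 0 fun j _ => (κ j).coe_nonneg)
  have hM2 : (0:ℝ) < M ^ 2 := hS_pos.trans hM
  set L : ℝ := Real.log (M ^ 2 / S) with hL_def
  have hL0 : 0 ≤ L := Real.log_nonneg ((one_le_div hS_pos).2 hM.le)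
  set t : ℝ := (1 - S / M ^ 2) / (2 * κ 0) with ht_def
  have hratio : 0 < S / M ^ 2 := div_pos hS_pos hM2
  have hratio1 : S / M ^ 2 < 1 := (div_lt_one hM2).2 hM
  have ht_pos : 0 < t := div_pos (by linarith) (by positivity)
  have hts : 2 * t * (κ 0 : ℝ) = 1 - S / M ^ 2 := by
    rw [ht_def]
    field_simp
  have hκle : ∀ n, (κ n : ℝ) ≤ κ 0 := fun n => by exact_mod_cast hmono (Nat.zero_le n)
  have hκnn : ∀ n, (0:ℝ) ≤ κ n := fun n => (κ n).coe_nonneg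
  have hlt : ∀ n, 2 * t * (κ n : ℝ) < 1 := by
    intro n
    have h1 : 2 * t * (κ n : ℝ) ≤ 2 * t * κ 0 := by nlinarith [ht_pos, hκle n, hκnn n]
    rw [hts] at h1
    linarith
  set Z : ℕ → Ω → ℝ := fun n ω => X n ω ^ 2 with hZ_def
  have hZmeas : ∀ n, Measurable (Z n) := fun n => (hXmeas n).pow_const 2
  have hindepZ : iIndepFun Z P :=
    hindep.comp (fun _ x => x ^ 2) fun _ => measurable_id.pow_const 2
  have hmgf : ∀ n, Integrable (fun ω => rexp (t * Z n ω)) P ∧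
      mgf (Z n) P t = (Real.sqrt (1 - 2 * t * κ n))⁻¹ := by
    intro n
    obtain ⟨hint, hval⟩ := gauss_exp_sq_aux (κ n) (hlt n)
    rw [← hlaw n] at hint hval
    have hg : AEStronglyMeasurable (fun x : ℝ => rexp (t * x ^ 2)) (P.map (X n)) :=
      (Real.measurable_exp.comp ((measurable_id.pow_const 2).const_mul t)).aestronglyMeasurable
    constructor
    · exact (integrable_map_measure hg (hXmeas n).aemeasurable).mp hint
    · rw [integral_map (hXmeas n).aemeasurable hg] at hval
      exact hval
  have hfac : ∀ n, mgf (Z n) P t ≤ rexp ((κ n : ℝ) / (2 * κ 0) * L) := by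
    intro n
    rw [(hmgf n).2]
    have ha1 : (κ n : ℝ) / κ 0 ≤ 1 := (div_le_one hκ0).2 (hκle n)
    have ha0 : 0 ≤ (κ n : ℝ) / κ 0 := div_nonneg (hκnn n) hκ0.le
    have key := sqrt_inv_le_exp_aux (s := 1 - S / M ^ 2) (a := (κ n : ℝ) / κ 0)
      (by linarith) (by linarith) ha0 ha1
    have h1 : (κ n : ℝ) / κ 0 * (1 - S / M ^ 2) = 2 * t * κ n := by
      rw [← hts]
      field_simp
    have h2 : (1 - (1 - S / M ^ 2))⁻¹ = M ^ 2 / S := by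
      rw [sub_sub_cancel, inv_div]
    rw [h1, h2] at key
    refine key.trans (le_of_eq ?_)
    rw [hL_def]
    congr 1
    ring
  have hprod : ∀ N : ℕ, ∏ n ∈ Finset.range N, mgf (Z n) P t ≤ rexp (S / (2 * κ 0) * L) := by
    intro N
    calc ∏ n ∈ Finset.range N, mgf (Z n) P t
        ≤ ∏ n ∈ Finset.range N, rexp ((κ n : ℝ) / (2 * κ 0) * L) :=
          Finset.prod_le_prod (fun i _ => mgf_nonneg) fun i _ => hfac i
      _ = rexp (∑ n ∈ Finset.range N, (κ n : ℝ) / (2 * κ 0) * L) := (Real.exp_sum _ _).symm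
      _ ≤ rexp (S / (2 * κ 0) * L) := by
          rw [Real.exp_le_exp]
          have hsum_le : ∑ n ∈ Finset.range N, (κ n : ℝ) ≤ S :=
            Summable.sum_le_tsum _ (fun i _ => hκnn i) hsum
          calc ∑ n ∈ Finset.range N, (κ n : ℝ) / (2 * κ 0) * L
              = (∑ n ∈ Finset.range N, (κ n : ℝ)) * (L / (2 * κ 0)) := by
                rw [Finset.sum_mul]
                exact Finset.sum_congr rfl fun n _ => by ring
            _ ≤ S * (L / (2 * κ 0)) :=
                mul_le_mul_of_nonneg_right hsum_le (by positivity)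
            _ = S / (2 * κ 0) * L := by ring
  set B : ℝ≥0∞ := ENNReal.ofReal (rexp (S / (2 * κ 0) * L)) with hB_def
  set F : ℕ → Ω → ℝ≥0∞ :=
    fun N ω => ENNReal.ofReal (rexp (t * ∑ n ∈ Finset.range N, Z n ω)) with hF_def
  have hFmeas : ∀ N, Measurable (F N) := by
    intro N
    have h1 : Measurable fun ω => ∑ n ∈ Finset.range N, Z n ω :=
      Finset.measurable_sum _ fun i _ => hZmeas i
    exact (Real.measurable_exp.comp (h1.const_mul t)).ennreal_ofReal
  have hlint : ∀ N, ∫⁻ ω, F N ω ∂P ≤ B := by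
    intro N
    have hint : Integrable (fun ω => rexp (t * (∑ n ∈ Finset.range N, Z n) ω)) P :=
      hindepZ.integrable_exp_mul_sum hZmeas fun i _ => (hmgf i).1
    have h0 : ∀ ω, F N ω = ENNReal.ofReal (rexp (t * (∑ n ∈ Finset.range N, Z n) ω)) := by
      intro ω
      simp [hF_def, Finset.sum_apply]
    have heq : ∫⁻ ω, F N ω ∂P = ENNReal.ofReal (mgf (∑ n ∈ Finset.range N, Z n) P t) :=
      calc ∫⁻ ω, F N ω ∂P
          = ∫⁻ ω, ENNReal.ofReal (rexp (t * (∑ n ∈ Finset.range N, Z n) ω)) ∂P :=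
            lintegral_congr h0
        _ = ENNReal.ofReal (∫ ω, rexp (t * (∑ n ∈ Finset.range N, Z n) ω) ∂P) :=
            (ofReal_integral_eq_lintegral_ofReal hint
              (ae_of_all _ fun ω => (Real.exp_pos _).le)).symm
        _ = ENNReal.ofReal (mgf (∑ n ∈ Finset.range N, Z n) P t) := rfl
    rw [heq, hindepZ.mgf_sum hZmeas]
    exact ENNReal.ofReal_le_ofReal (hprod N)
  set c : ℝ≥0∞ := ENNReal.ofReal (rexp (t * M ^ 2)) with hc_def
  have hsub : {ω | M ^ 2 ≤ ∑' n, X n ω ^ 2}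
      ⊆ {ω | c ≤ atTop.liminf fun N => F N ω} := by
    intro ω hω
    simp only [Set.mem_setOf_eq] at hω ⊢
    have hsumm : Summable fun n => X n ω ^ 2 := by
      by_contra h
      rw [tsum_eq_zero_of_not_summable h] at hω
      linarith
    have htend : Tendsto (fun N => ∑ n ∈ Finset.range N, X n ω ^ 2) atTop
        (𝓝 (∑' n, X n ω ^ 2)) := hsumm.hasSum.tendsto_sum_nat
    have h1 : Tendsto (fun N => t * ∑ n ∈ Finset.range N, X n ω ^ 2) atTop
        (𝓝 (t * ∑' n, X n ω ^ 2)) := htend.const_mul t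
    have h2 := (Real.continuous_exp.tendsto _).comp h1
    have h3 : Tendsto (fun N => F N ω) atTop
        (𝓝 (ENNReal.ofReal (rexp (t * ∑' n, X n ω ^ 2)))) :=
      (ENNReal.continuous_ofReal.tendsto _).comp h2
    rw [h3.liminf_eq]
    exact ENNReal.ofReal_le_ofReal
      (Real.exp_le_exp.2 (mul_le_mul_of_nonneg_left hω ht_pos.le))
  have main : c * P {ω | M ^ 2 ≤ ∑' n, X n ω ^ 2} ≤ B := by
    calc c * P {ω | M ^ 2 ≤ ∑' n, X n ω ^ 2}
        ≤ c * P {ω | c ≤ atTop.liminf fun N => F N ω} :=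
          mul_le_mul_right (measure_mono hsub) c
      _ ≤ ∫⁻ ω, atTop.liminf (fun N => F N ω) ∂P :=
          mul_meas_ge_le_lintegral₀ (Measurable.aemeasurable (by
            exact Measurable.liminf hFmeas)) c
      _ ≤ atTop.liminf fun N => ∫⁻ ω, F N ω ∂P := lintegral_liminf_le hFmeas
      _ ≤ B := liminf_le_of_frequently_le' (Frequently.of_forall hlint)
  have hcB : B = c * ENNReal.ofReal
      (rexp (-(M ^ 2) / (2 * κ 0) + S / (2 * κ 0) + S / (2 * κ 0) * L)) := by
    rw [hc_def, hB_def, ← ENNReal.ofReal_mul (Real.exp_pos _).le, ← Real.exp_add]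
    congr 1
    have htM : t * M ^ 2 = M ^ 2 / (2 * κ 0) - S / (2 * κ 0) := by
      rw [ht_def]
      field_simp
      linear_combination (-S) * mul_inv_cancel₀ hM2.ne'
    rw [htM]
    ring
  rw [hcB] at main
  have hc0 : c ≠ 0 := by
    rw [hc_def]
    simp [Real.exp_pos]
  have hctop : c ≠ ⊤ := ENNReal.ofReal_ne_top
  exact (ENNReal.mul_le_mul_iff_right hc0 hctop).mp main
end

section
/- Let μ be a Borel probability measure on ℝ^d with finite second moment, and let φ : ℝ^d → ℝ be convex and differentiable, with φ integrable with respect to μ and ∫ ‖∇φ(x)‖² dμ(x) < ∞. Let ν = (∇φ)_#μ be the pushforward of μ under the map ∇φ. Then for every coupling γ of μ and ν, ∫_{ℝ^d×ℝ^d} ‖x − y‖² dγ(x,y) ≥ ∫_{ℝ^d} ‖x − ∇φ(x)‖² dμ(x); that is, the coupling (Id × ∇φ)_#μ induced by the map ∇φ minimizes the quadratic transport cost among all couplings of μ and ν. -/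
open MeasureTheory
open scoped RealInnerProductSpace

open scoped RealInnerProductSpace


lemma grad_subgradient {d : ℕ} (φ : (EuclideanSpace ℝ (Fin d)) → ℝ) (hconv : ConvexOn ℝ Set.univ φ)
    (hdiff : Differentiable ℝ φ) (z x : EuclideanSpace ℝ (Fin d)) :
    ⟪gradient φ z, x - z⟫ ≤ φ x - φ z := by
  rcases eq_or_ne x z with rfl | hxz
  · simp
  have hline : ∀ t : ℝ, HasDerivAt (fun t : ℝ => z + t • (x - z)) (x - z) t := by
    intro t
    simpa using ((hasDerivAt_id t).smul_const (x - z)).const_add z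
  set c : ℝ → EuclideanSpace ℝ (Fin d) := fun t => z + t • (x - z) with hc
  have hconv1 : ConvexOn ℝ Set.univ (fun t : ℝ => φ (c t)) := by
    have : ConvexOn ℝ ((AffineMap.lineMap z x : ℝ →ᵃ[ℝ] EuclideanSpace ℝ (Fin d)) ⁻¹' Set.univ)
        (φ ∘ (AffineMap.lineMap z x)) := hconv.comp_affineMap _
    have he : (φ ∘ (AffineMap.lineMap z x : ℝ →ᵃ[ℝ] EuclideanSpace ℝ (Fin d)))
        = fun t : ℝ => φ (c t) := by
      funext t
      simp only [Function.comp, AffineMap.lineMap_apply_module, hc]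
      congr 1
      module
    rw [he] at this
    simpa using this
  have hder : ∀ t : ℝ, HasDerivAt (fun t : ℝ => φ (c t)) ⟪gradient φ (c t), x - z⟫ t := by
    intro t
    have hg : HasFDerivAt φ (InnerProductSpace.toDual ℝ _ (gradient φ (c t))) (c t) :=
      ((hdiff (c t)).hasGradientAt).hasFDerivAt
    simpa [Function.comp_def] using hg.comp_hasDerivAt t (hline t)
  have h01 : (0:ℝ) < 1 := one_pos
  have := hconv1.le_slope_of_hasDerivAt (Set.mem_univ 0) (Set.mem_univ 1) h01 (hder 0)
  have hc0 : c 0 = z := by simp [hc]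
  have hc1 : c 1 = x := by simp [hc]
  rw [slope_def_field] at this
  simp only [hc0, hc1] at this
  simpa using this

lemma grad_measurable {d : ℕ} (φ : EuclideanSpace ℝ (Fin d) → ℝ) :
    Measurable (gradient φ) :=
  ((InnerProductSpace.toDual ℝ (EuclideanSpace ℝ (Fin d))).symm.continuous.measurable).comp
    (measurable_fderiv ℝ φ)

lemma enn_key {d : ℕ} (v : EuclideanSpace ℝ (Fin d)) :
    ((‖v‖₊ : ENNReal)) ^ 2 = ENNReal.ofReal (‖v‖ ^ 2) := by
  rw [ENNReal.ofReal_pow (norm_nonneg v), ofReal_norm, enorm_eq_nnnorm]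

/-- The gradient of a convex differentiable function is an optimal transport map onto its
pushforward: every coupling `γ` of `μ` and `ν = (∇φ)_#μ` has quadratic cost at least that of
the coupling induced by `∇φ`. -/
theorem gradient_convex_optimal_transport {d : ℕ}
    (μ : Measure (EuclideanSpace ℝ (Fin d))) [IsProbabilityMeasure μ]
    (hmom : Integrable (fun x => ‖x‖ ^ 2) μ)
    (φ : EuclideanSpace ℝ (Fin d) → ℝ)
    (hconv : ConvexOn ℝ Set.univ φ) (hdiff : Differentiable ℝ φ)
    (hφint : Integrable φ μ)
    (hgradint : Integrable (fun x => ‖gradient φ x‖ ^ 2) μ)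
    (γ : Measure (EuclideanSpace ℝ (Fin d) × EuclideanSpace ℝ (Fin d)))
    (hγ1 : γ.map Prod.fst = μ)
    (hγ2 : γ.map Prod.snd = μ.map (gradient φ)) :
    ∫⁻ x, (‖x - gradient φ x‖₊ : ENNReal) ^ 2 ∂μ
      ≤ ∫⁻ p, (‖p.1 - p.2‖₊ : ENNReal) ^ 2 ∂γ := by
  classical
  set g := gradient φ with hgdef
  have hgmeas : Measurable g := grad_measurable φ
  have hφcont : Continuous φ := hdiff.continuous
  have hφmeas : Measurable φ := hφcont.measurable
  have hsub : ∀ z x : (EuclideanSpace ℝ (Fin d)), ⟪g z, x - z⟫ ≤ φ x - φ z := grad_subgradient φ hconv hdiff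
  have hbound : ∀ z x : (EuclideanSpace ℝ (Fin d)), ⟪x, g z⟫ - φ x ≤ ⟪z, g z⟫ - φ z := by
    intro z x
    have h := hsub z x
    rw [inner_sub_right] at h
    have e1 : ⟪g z, x⟫ = ⟪x, g z⟫ := real_inner_comm _ _
    have e2 : ⟪g z, z⟫ = ⟪z, g z⟫ := real_inner_comm _ _
    linarith
  by_cases hfin : (∫⁻ p, (‖p.1 - p.2‖₊ : ENNReal) ^ 2 ∂γ) = ⊤
  · rw [hfin]; exact le_top
  -- cost integrability on γ
  have hcostcont : Continuous fun p : (EuclideanSpace ℝ (Fin d)) × (EuclideanSpace ℝ (Fin d)) => ‖p.1 - p.2‖ ^ 2 :=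
    ((continuous_fst.sub continuous_snd).norm.pow 2)
  have hcostint : Integrable (fun p : (EuclideanSpace ℝ (Fin d)) × (EuclideanSpace ℝ (Fin d)) => ‖p.1 - p.2‖ ^ 2) γ := by
    refine ⟨hcostcont.measurable.aestronglyMeasurable, ?_⟩
    rw [hasFiniteIntegral_iff_ofReal (Filter.Eventually.of_forall fun p => sq_nonneg _)]
    have : ∀ p : (EuclideanSpace ℝ (Fin d)) × (EuclideanSpace ℝ (Fin d)), ENNReal.ofReal (‖p.1 - p.2‖ ^ 2) = ((‖p.1 - p.2‖₊ : ENNReal)) ^ 2 :=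
      fun p => (enn_key _).symm
    simp_rw [this]
    exact lt_top_iff_ne_top.mpr hfin
  -- pull integrability along marginals
  have pull1 : ∀ {f : (EuclideanSpace ℝ (Fin d)) → ℝ}, Measurable f → Integrable f μ →
      Integrable (fun p : (EuclideanSpace ℝ (Fin d)) × (EuclideanSpace ℝ (Fin d)) => f p.1) γ := by
    intro f hfm hfi
    have h1 : Integrable f (γ.map Prod.fst) := by rwa [hγ1]
    exact (integrable_map_measure hfm.aestronglyMeasurable measurable_fst.aemeasurable).mp h1
  have pull2 : ∀ {f : (EuclideanSpace ℝ (Fin d)) → ℝ}, Measurable f → Integrable (fun z => f (g z)) μ →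
      Integrable (fun p : (EuclideanSpace ℝ (Fin d)) × (EuclideanSpace ℝ (Fin d)) => f p.2) γ := by
    intro f hfm hfi
    have h1 : Integrable f (μ.map g) :=
      (integrable_map_measure hfm.aestronglyMeasurable hgmeas.aemeasurable).mpr hfi
    have h2 : Integrable f (γ.map Prod.snd) := by rwa [hγ2]
    exact (integrable_map_measure hfm.aestronglyMeasurable measurable_snd.aemeasurable).mp h2
  have ifst : ∀ {f : (EuclideanSpace ℝ (Fin d)) → ℝ}, Measurable f → ∫ p, f p.1 ∂γ = ∫ x, f x ∂μ := by
    intro f hfm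
    have h := integral_map (μ := γ) measurable_fst.aemeasurable
      (hfm.aestronglyMeasurable (μ := γ.map Prod.fst))
    rw [hγ1] at h
    exact h.symm
  have isnd : ∀ {f : (EuclideanSpace ℝ (Fin d)) → ℝ}, Measurable f → ∫ p, f p.2 ∂γ = ∫ z, f (g z) ∂μ := by
    intro f hfm
    have h1 := integral_map (μ := γ) measurable_snd.aemeasurable
      (hfm.aestronglyMeasurable (μ := γ.map Prod.snd))
    rw [hγ2] at h1
    have h2 := integral_map (μ := μ) hgmeas.aemeasurable
      (hfm.aestronglyMeasurable (μ := μ.map g))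
    exact h1.symm.trans h2
  -- integrability facts
  have hsq1 : Integrable (fun p : (EuclideanSpace ℝ (Fin d)) × (EuclideanSpace ℝ (Fin d)) => ‖p.1‖ ^ 2) γ :=
    pull1 (continuous_norm.pow 2).measurable hmom
  have hsq2 : Integrable (fun p : (EuclideanSpace ℝ (Fin d)) × (EuclideanSpace ℝ (Fin d)) => ‖p.2‖ ^ 2) γ :=
    pull2 (continuous_norm.pow 2).measurable hgradint
  have hinncontγ : Continuous fun p : (EuclideanSpace ℝ (Fin d)) × (EuclideanSpace ℝ (Fin d)) => ⟪p.1, p.2⟫ :=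
    continuous_inner
  have hinner_γ : Integrable (fun p : (EuclideanSpace ℝ (Fin d)) × (EuclideanSpace ℝ (Fin d)) => ⟪p.1, p.2⟫) γ := by
    refine (hsq1.add hsq2).mono hinncontγ.measurable.aestronglyMeasurable
      (Filter.Eventually.of_forall fun p => ?_)
    have h1 : |⟪p.1, p.2⟫| ≤ ‖p.1‖ * ‖p.2‖ := abs_real_inner_le_norm _ _
    have h2 : (0:ℝ) ≤ ‖p.1‖ := norm_nonneg _
    have h3 : (0:ℝ) ≤ ‖p.2‖ := norm_nonneg _
    simp only [Pi.add_apply, Real.norm_eq_abs]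
    rw [abs_of_nonneg (by positivity : (0:ℝ) ≤ ‖p.1‖ ^ 2 + ‖p.2‖ ^ 2)]
    nlinarith
  have hμinnermeas : Measurable fun z : (EuclideanSpace ℝ (Fin d)) => ⟪z, g z⟫ :=
    hinncontγ.measurable.comp (measurable_id.prodMk hgmeas)
  have hμinner : Integrable (fun z : (EuclideanSpace ℝ (Fin d)) => ⟪z, g z⟫) μ := by
    refine (hmom.add hgradint).mono hμinnermeas.aestronglyMeasurable
      (Filter.Eventually.of_forall fun z => ?_)
    have h1 : |⟪z, g z⟫| ≤ ‖z‖ * ‖g z‖ := abs_real_inner_le_norm _ _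
    have h2 : (0:ℝ) ≤ ‖z‖ := norm_nonneg _
    have h3 : (0:ℝ) ≤ ‖g z‖ := norm_nonneg _
    simp only [Pi.add_apply, Real.norm_eq_abs]
    rw [abs_of_nonneg (by positivity : (0:ℝ) ≤ ‖z‖ ^ 2 + ‖g z‖ ^ 2)]
    nlinarith
  have hμcostmeas : Measurable fun z : (EuclideanSpace ℝ (Fin d)) => ‖z - g z‖ ^ 2 :=
    ((measurable_id.sub hgmeas).norm.pow_const 2)
  have hμcost : Integrable (fun z : (EuclideanSpace ℝ (Fin d)) => ‖z - g z‖ ^ 2) μ := by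
    refine ((hmom.add hgradint).const_mul 2).mono hμcostmeas.aestronglyMeasurable
      (Filter.Eventually.of_forall fun z => ?_)
    have h1 : ‖z - g z‖ ≤ ‖z‖ + ‖g z‖ := norm_sub_le _ _
    have h2 : (0:ℝ) ≤ ‖z - g z‖ := norm_nonneg _
    have h3 : (0:ℝ) ≤ ‖z‖ := norm_nonneg _
    have h4 : (0:ℝ) ≤ ‖g z‖ := norm_nonneg _
    simp only [Pi.add_apply, Real.norm_eq_abs]
    rw [abs_of_nonneg (by positivity : (0:ℝ) ≤ ‖z - g z‖ ^ 2),
      abs_of_nonneg (by positivity : (0:ℝ) ≤ 2 * (‖z‖ ^ 2 + ‖g z‖ ^ 2))]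
    nlinarith [sq_nonneg (‖z‖ - ‖g z‖), mul_le_mul h1 h1 h2 (by positivity : (0:ℝ) ≤ ‖z‖ + ‖g z‖)]
  -- the Legendre-type function ψ
  haveI : Nonempty (EuclideanSpace ℝ (Fin d)) := ⟨0⟩
  set u : ℕ → (EuclideanSpace ℝ (Fin d)) := TopologicalSpace.denseSeq (EuclideanSpace ℝ (Fin d)) with hudef
  have hu : DenseRange u := TopologicalSpace.denseRange_denseSeq (EuclideanSpace ℝ (Fin d))
  set ψ : (EuclideanSpace ℝ (Fin d)) → ℝ := fun y => ⨆ n, (⟪u n, y⟫ - φ (u n)) with hψdef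
  have htermcont : ∀ n, Continuous fun y : (EuclideanSpace ℝ (Fin d)) => ⟪u n, y⟫ - φ (u n) := fun n =>
    (continuous_const.inner continuous_id).sub continuous_const
  have hψmeas : Measurable ψ :=
    Measurable.iSup fun n => (htermcont n).measurable
  have hbdd : ∀ z : (EuclideanSpace ℝ (Fin d)), BddAbove (Set.range fun n => ⟪u n, g z⟫ - φ (u n)) := by
    intro z
    refine ⟨⟪z, g z⟫ - φ z, ?_⟩
    rintro r ⟨n, rfl⟩
    exact hbound z (u n)
  have hψg : ∀ z : (EuclideanSpace ℝ (Fin d)), ψ (g z) = ⟪z, g z⟫ - φ z := by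
    intro z
    refine le_antisymm (ciSup_le fun n => hbound z (u n)) ?_
    refine le_of_forall_pos_le_add fun ε hε => ?_
    have hcont : Continuous fun x : (EuclideanSpace ℝ (Fin d)) => ⟪x, g z⟫ - φ x :=
      (continuous_id.inner continuous_const).sub hφcont
    have hopen : IsOpen {x : (EuclideanSpace ℝ (Fin d)) | ⟪z, g z⟫ - φ z - ε < ⟪x, g z⟫ - φ x} :=
      isOpen_lt continuous_const hcont
    have hzmem : z ∈ {x : (EuclideanSpace ℝ (Fin d)) | ⟪z, g z⟫ - φ z - ε < ⟪x, g z⟫ - φ x} := by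
      simp only [Set.mem_setOf_eq]; linarith
    obtain ⟨n, hn⟩ := hu.exists_mem_open hopen ⟨z, hzmem⟩
    simp only [Set.mem_setOf_eq] at hn
    have := le_ciSup (hbdd z) n
    rw [hψdef]
    dsimp only
    linarith
  -- a.e. Fenchel-Young inequality on γ
  set B : Set (EuclideanSpace ℝ (Fin d)) := {y | ∀ n, ⟪u n, y⟫ - φ (u n) ≤ ψ y} with hBdef
  have hBmeas : MeasurableSet B := by
    have : B = ⋂ n, {y : (EuclideanSpace ℝ (Fin d)) | ⟪u n, y⟫ - φ (u n) ≤ ψ y} := by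
      ext y; simp [hBdef]
    rw [this]
    exact MeasurableSet.iInter fun n =>
      measurableSet_le (htermcont n).measurable hψmeas
  have hgB : ∀ z : (EuclideanSpace ℝ (Fin d)), g z ∈ B := by
    intro z n
    rw [hψg z]
    exact hbound z (u n)
  have haeB : ∀ᵐ p ∂γ, p.2 ∈ B := by
    rw [ae_iff]
    have hset : {p : (EuclideanSpace ℝ (Fin d)) × (EuclideanSpace ℝ (Fin d)) | ¬ p.2 ∈ B} = Prod.snd ⁻¹' Bᶜ := rfl
    rw [hset, ← Measure.map_apply measurable_snd hBmeas.compl, hγ2,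
      Measure.map_apply hgmeas hBmeas.compl]
    have : g ⁻¹' Bᶜ = ∅ := by
      ext z; simp [hgB z]
    rw [this]
    simp
  have hkey : ∀ᵐ p ∂γ, ⟪p.1, p.2⟫ ≤ φ p.1 + ψ p.2 := by
    filter_upwards [haeB] with p hp
    have hC : IsClosed {x : (EuclideanSpace ℝ (Fin d)) | ⟪x, p.2⟫ - φ x ≤ ψ p.2} :=
      isClosed_le ((continuous_id.inner continuous_const).sub hφcont) continuous_const
    have hsubC : Set.range u ⊆ {x : (EuclideanSpace ℝ (Fin d)) | ⟪x, p.2⟫ - φ x ≤ ψ p.2} := by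
      rintro _ ⟨n, rfl⟩
      exact hp n
    have hclo : closure (Set.range u) ⊆ {x : (EuclideanSpace ℝ (Fin d)) | ⟪x, p.2⟫ - φ x ≤ ψ p.2} :=
      hC.closure_subset_iff.mpr hsubC
    have huniv : (Set.univ : Set (EuclideanSpace ℝ (Fin d))) ⊆ {x : (EuclideanSpace ℝ (Fin d)) | ⟪x, p.2⟫ - φ x ≤ ψ p.2} := by
      rw [← hu.closure_eq]
      exact hclo
    have := huniv (Set.mem_univ p.1)
    simp only [Set.mem_setOf_eq] at this
    linarith
  -- integrability of φ ∘ fst and ψ ∘ snd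
  have hφfst : Integrable (fun p : (EuclideanSpace ℝ (Fin d)) × (EuclideanSpace ℝ (Fin d)) => φ p.1) γ := pull1 hφmeas hφint
  have hψgint : Integrable (fun z => ψ (g z)) μ := by
    have he : (fun z => ψ (g z)) = fun z => ⟪z, g z⟫ - φ z := funext hψg
    rw [he]
    exact hμinner.sub hφint
  have hψsnd : Integrable (fun p : (EuclideanSpace ℝ (Fin d)) × (EuclideanSpace ℝ (Fin d)) => ψ p.2) γ := pull2 hψmeas hψgint
  -- the key integral inequality
  have hstep : ∫ p, ⟪p.1, p.2⟫ ∂γ ≤ ∫ z, ⟪z, g z⟫ ∂μ := by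
    have h1 : ∫ p, ⟪p.1, p.2⟫ ∂γ ≤ ∫ p, (φ p.1 + ψ p.2) ∂γ :=
      integral_mono_ae hinner_γ (hφfst.add hψsnd) hkey
    have h2 : ∫ p, (φ p.1 + ψ p.2) ∂γ = ∫ x, φ x ∂μ + ∫ z, ψ (g z) ∂μ := by
      rw [integral_add hφfst hψsnd, ifst hφmeas, isnd hψmeas]
    have h3 : ∫ z, ψ (g z) ∂μ = ∫ z, ⟪z, g z⟫ ∂μ - ∫ z, φ z ∂μ := by
      have he : (fun z => ψ (g z)) = fun z => ⟪z, g z⟫ - φ z := funext hψg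
      rw [he, integral_sub hμinner hφint]
    rw [h2, h3] at h1
    have : ∫ z, φ z ∂μ = ∫ x, φ x ∂μ := rfl
    linarith
  -- real-valued cost comparison
  have e1 : ∫ z, ‖z - g z‖ ^ 2 ∂μ
      = ∫ z, ‖z‖ ^ 2 ∂μ - 2 * ∫ z, ⟪z, g z⟫ ∂μ + ∫ z, ‖g z‖ ^ 2 ∂μ := by
    have he : (fun z : (EuclideanSpace ℝ (Fin d)) => ‖z - g z‖ ^ 2)
        = fun z => ‖z‖ ^ 2 - 2 * ⟪z, g z⟫ + ‖g z‖ ^ 2 := by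
      funext z; exact norm_sub_sq_real z (g z)
    have hub : Integrable (fun z : (EuclideanSpace ℝ (Fin d)) => 2 * ⟪z, g z⟫) μ :=
      hμinner.const_mul 2
    have hoa : Integrable (fun z : (EuclideanSpace ℝ (Fin d)) => ‖z‖ ^ 2 - 2 * ⟪z, g z⟫) μ :=
      hmom.sub hub
    rw [he, integral_add hoa hgradint, integral_sub hmom hub, integral_const_mul]
  have e2 : ∫ p, ‖p.1 - p.2‖ ^ 2 ∂γ
      = ∫ z, ‖z‖ ^ 2 ∂μ - 2 * ∫ p, ⟪p.1, p.2⟫ ∂γ + ∫ z, ‖g z‖ ^ 2 ∂μ := by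
    have he : (fun p : (EuclideanSpace ℝ (Fin d)) × (EuclideanSpace ℝ (Fin d)) => ‖p.1 - p.2‖ ^ 2)
        = fun p => ‖p.1‖ ^ 2 - 2 * ⟪p.1, p.2⟫ + ‖p.2‖ ^ 2 := by
      funext p; exact norm_sub_sq_real p.1 p.2
    have hub : Integrable (fun p : (EuclideanSpace ℝ (Fin d)) × (EuclideanSpace ℝ (Fin d)) =>
        2 * ⟪p.1, p.2⟫) γ := hinner_γ.const_mul 2
    have hoa : Integrable (fun p : (EuclideanSpace ℝ (Fin d)) × (EuclideanSpace ℝ (Fin d)) =>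
        ‖p.1‖ ^ 2 - 2 * ⟪p.1, p.2⟫) γ := hsq1.sub hub
    rw [he, integral_add hoa hsq2, integral_sub hsq1 hub, integral_const_mul,
      ifst (f := fun x => ‖x‖ ^ 2) (continuous_norm.pow 2).measurable,
      isnd (f := fun x => ‖x‖ ^ 2) (continuous_norm.pow 2).measurable]
  have hreal : ∫ z, ‖z - g z‖ ^ 2 ∂μ ≤ ∫ p, ‖p.1 - p.2‖ ^ 2 ∂γ := by
    rw [e1, e2]
    linarith
  -- convert back to lintegrals
  have L1 : ∫⁻ x, (‖x - g x‖₊ : ENNReal) ^ 2 ∂μ = ENNReal.ofReal (∫ z, ‖z - g z‖ ^ 2 ∂μ) := by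
    rw [ofReal_integral_eq_lintegral_ofReal hμcost
      (Filter.Eventually.of_forall fun z => sq_nonneg _)]
    simp_rw [enn_key]
  have L2 : ∫⁻ p, (‖p.1 - p.2‖₊ : ENNReal) ^ 2 ∂γ
      = ENNReal.ofReal (∫ p, ‖p.1 - p.2‖ ^ 2 ∂γ) := by
    rw [ofReal_integral_eq_lintegral_ofReal hcostint
      (Filter.Eventually.of_forall fun p => sq_nonneg _)]
    simp_rw [enn_key]
  rw [L1, L2]
  exact ENNReal.ofReal_le_ofReal hreal
end

section
/- Let μ be a Borel probability measure on ℝ^d with finite second moment, and let ψ : ℝ^d → ℝ be twice continuously differentiable with ψ integrable with respect to μ, ∫‖∇ψ(x)‖² dμ(x) < ∞, and with the operator norm of the Hessian uniformly bounded: ‖∇²ψ(x)‖ ≤ L for all x, where L > 0. Then for every real h with |h| ≤ 1/L, setting T = Id + h∇ψ and ν = T_#μ: (i) every coupling γ of μ and ν satisfies ∫‖x − y‖² dγ(x,y) ≥ h²·∫‖∇ψ(x)‖² dμ(x); (ii) the coupling (Id × T)_#μ has quadratic cost exactly h²·∫‖∇ψ‖² dμ. Consequently the infimum of ∫‖x−y‖²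 dγ over all couplings γ of μ and ν (i.e. the squared 2-Wasserstein distance W₂(μ, T_#μ)²) equals h²·∫‖∇ψ‖² dμ, so T is an optimal transport map from μ to T_#μ. -/
open MeasureTheory
open scoped RealInnerProductSpace ENNReal NNReal

variable {E : Type*} [NormedAddCommGroup E] [InnerProductSpace ℝ E]

lemma grad_diff (ψ : E → ℝ) (hψ : ContDiff ℝ 2 ψ) [CompleteSpace E] :
    Differentiable ℝ (gradient ψ) := by
  have hfd : Differentiable ℝ (fderiv ℝ ψ) :=
    (hψ.fderiv_right (m := 1) (by norm_num)).differentiable (by norm_num)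
  have : Differentiable ℝ (fun x => (InnerProductSpace.toDual ℝ E).symm (fderiv ℝ ψ x)) :=
    (InnerProductSpace.toDual ℝ E).symm.toContinuousLinearEquiv.toContinuousLinearMap.differentiable.comp hfd
  exact this

lemma grad_cont (ψ : E → ℝ) (hψ : ContDiff ℝ 2 ψ) [CompleteSpace E] :
    Continuous (gradient ψ) := by
  have hfd : Continuous (fderiv ℝ ψ) := hψ.continuous_fderiv (by norm_num)
  exact (InnerProductSpace.toDual ℝ E).symm.continuous.comp hfd

lemma grad_lip (ψ : E → ℝ) (hψ : ContDiff ℝ 2 ψ) [CompleteSpace E]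
    {L : ℝ} (hL : 0 < L) (hHess : ∀ x, ‖fderiv ℝ (gradient ψ) x‖ ≤ L) :
    ∀ a b, ‖gradient ψ a - gradient ψ b‖ ≤ L * ‖a - b‖ := by
  have hlip : LipschitzWith L.toNNReal (gradient ψ) := by
    apply lipschitzWith_of_nnnorm_fderiv_le (grad_diff ψ hψ)
    intro x
    rw [← NNReal.coe_le_coe]
    simpa [Real.coe_toNNReal _ hL.le] using hHess x
  intro a b
  have := hlip.dist_le_mul a b
  simpa [dist_eq_norm, Real.coe_toNNReal _ hL.le] using this

lemma key_ineq (ψ : E → ℝ) (hψ : ContDiff ℝ 2 ψ) [CompleteSpace E]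
    {L : ℝ} (hL : 0 < L) (hHess : ∀ x, ‖fderiv ℝ (gradient ψ) x‖ ≤ L)
    {h : ℝ} (hh : |h| ≤ 1 / L) (x z : E) :
    ⟪x - z, z + h • gradient ψ z⟫ ≤
      (‖x‖ ^ 2 / 2 + h * ψ x) - (‖z‖ ^ 2 / 2 + h * ψ z) := by
  set v := x - z with hv
  set w := z + h • gradient ψ z with hw
  set f : ℝ → ℝ := fun t => (‖z + t • v‖ ^ 2 / 2 + h * ψ (z + t • v)) - t * ⟪v, w⟫ with hf
  have hc : ∀ t : ℝ, HasDerivAt (fun t : ℝ => z + t • v) v t := by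
    intro t
    have : HasDerivAt (fun s : ℝ => s • v) ((1:ℝ) • v) t := (hasDerivAt_id t).smul_const v
    simpa using this.const_add z
  have hderiv : ∀ t : ℝ, HasDerivAt f
      ((⟪z + t • v, v⟫ + h * ⟪gradient ψ (z + t • v), v⟫) - ⟪v, w⟫) t := by
    intro t
    have h1 : HasDerivAt (fun t : ℝ => ‖z + t • v‖ ^ 2 / 2) ⟪z + t • v, v⟫ t := by
      have := ((hc t).inner ℝ (hc t)).div_const 2
      have heq : (fun t : ℝ => ⟪z + t • v, z + t • v⟫ / 2) = fun t : ℝ => ‖z + t • v‖ ^ 2 / 2 := by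
        funext s; rw [real_inner_self_eq_norm_sq]
      rw [heq] at this
      refine this.congr_deriv ?_
      rw [real_inner_comm (z + t • v) v]
      ring
    have h2 : HasDerivAt (fun t : ℝ => ψ (z + t • v)) ⟪gradient ψ (z + t • v), v⟫ t := by
      have hg := ((hψ.differentiable (by norm_num)) (z + t • v)).hasGradientAt
      have := hg.hasFDerivAt.comp_hasDerivAt t (hc t)
      refine this.congr_deriv ?_
      simp [InnerProductSpace.toDual_apply_apply]
    refine ((h1.add (h2.const_mul h)).sub ((hasDerivAt_id t).mul_const ⟪v, w⟫)).congr_deriv ?_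
    ring
  have hmono : MonotoneOn f (Set.Icc 0 1) := by
    apply monotoneOn_of_deriv_nonneg (convex_Icc 0 1)
    · exact fun t _ => ((hderiv t).continuousAt).continuousWithinAt
    · exact fun t _ => ((hderiv t).differentiableAt).differentiableWithinAt
    · intro t ht
      rw [interior_Icc, Set.mem_Ioo] at ht
      rw [(hderiv t).deriv]
      have expand : (⟪z + t • v, v⟫ + h * ⟪gradient ψ (z + t • v), v⟫) - ⟪v, w⟫
          = t * ‖v‖ ^ 2 + h * ⟪gradient ψ (z + t • v) - gradient ψ z, v⟫ := by
        simp only [hw, inner_add_left, inner_add_right, real_inner_smul_left,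
          real_inner_smul_right, inner_sub_left, real_inner_self_eq_norm_sq]
        rw [real_inner_comm v z, real_inner_comm v (gradient ψ z)]
        ring
      have hlip : ‖gradient ψ (z + t • v) - gradient ψ z‖ ≤ L * (t * ‖v‖) := by
        have := grad_lip ψ hψ hL hHess (z + t • v) z
        simpa [norm_smul, abs_of_pos ht.1] using this
      have hbnd : h * ⟪gradient ψ (z + t • v) - gradient ψ z, v⟫ ≥ -(t * ‖v‖ ^ 2) := by
        have h1 : |h * ⟪gradient ψ (z + t • v) - gradient ψ z, v⟫| ≤ t * ‖v‖ ^ 2 := by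
          rw [abs_mul]
          calc |h| * |⟪gradient ψ (z + t • v) - gradient ψ z, v⟫|
              ≤ |h| * (‖gradient ψ (z + t • v) - gradient ψ z‖ * ‖v‖) := by
                gcongr; exact abs_real_inner_le_norm _ _
            _ ≤ |h| * ((L * (t * ‖v‖)) * ‖v‖) := by
                gcongr
            _ = (|h| * L) * (t * ‖v‖ ^ 2) := by ring
            _ ≤ 1 * (t * ‖v‖ ^ 2) := by
                have hL1 : |h| * L ≤ 1 := by
                  rw [le_div_iff₀ hL] at hh; linarith
                nlinarith [mul_nonneg ht.1.le (sq_nonneg ‖v‖), abs_nonneg h]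
            _ = t * ‖v‖ ^ 2 := one_mul _
        linarith [neg_abs_le (h * ⟪gradient ψ (z + t • v) - gradient ψ z, v⟫)]
      rw [expand]
      linarith
  have := hmono (Set.left_mem_Icc.2 zero_le_one) (Set.right_mem_Icc.2 zero_le_one) zero_le_one
  have hf0 : f 0 = ‖z‖ ^ 2 / 2 + h * ψ z := by simp [hf]
  have hf1 : f 1 = (‖x‖ ^ 2 / 2 + h * ψ x) - ⟪v, w⟫ := by simp [hf, hv]
  rw [hf0, hf1] at this
  rw [real_inner_comm] at this ⊢
  linarith

open TopologicalSpace in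
set_option maxHeartbeats 1000000 in
/-- For a `C²` function `ψ` with uniformly bounded Hessian (`‖∇²ψ(x)‖ ≤ L`) and `|h| ≤ 1/L`,
the map `T = Id + h ∇ψ` is an optimal transport map from `μ` to `T_#μ`:
(i) every coupling of `μ` and `T_#μ` has quadratic cost at least `h² ∫‖∇ψ‖² dμ`;
(ii) the coupling induced by `T` has quadratic cost exactly `h² ∫‖∇ψ‖² dμ`;
and consequently the squared 2-Wasserstein distance `W₂(μ, T_#μ)²` (the infimum of the
quadratic cost over all couplings) equals `h² ∫‖∇ψ‖² dμ`. -/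
theorem perturbation_optimal_transport {d : ℕ}
    (μ : Measure (EuclideanSpace ℝ (Fin d))) [IsProbabilityMeasure μ]
    (hmom : Integrable (fun x => ‖x‖ ^ 2) μ)
    (ψ : EuclideanSpace ℝ (Fin d) → ℝ) (hψ : ContDiff ℝ 2 ψ)
    (hψint : Integrable ψ μ)
    (hgradint : Integrable (fun x => ‖gradient ψ x‖ ^ 2) μ)
    (L : ℝ) (hL : 0 < L)
    (hHess : ∀ x, ‖fderiv ℝ (gradient ψ) x‖ ≤ L)
    (h : ℝ) (hh : |h| ≤ 1 / L) :
    (∀ γ : Measure (EuclideanSpace ℝ (Fin d) × EuclideanSpace ℝ (Fin d)),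
        γ.map Prod.fst = μ →
        γ.map Prod.snd = μ.map (fun x => x + h • gradient ψ x) →
        ENNReal.ofReal (h ^ 2 * ∫ x, ‖gradient ψ x‖ ^ 2 ∂μ)
          ≤ ∫⁻ p, (‖p.1 - p.2‖₊ : ENNReal) ^ 2 ∂γ)
    ∧ (∫⁻ p, (‖p.1 - p.2‖₊ : ENNReal) ^ 2
          ∂(μ.map (fun x => (x, x + h • gradient ψ x)))
        = ENNReal.ofReal (h ^ 2 * ∫ x, ‖gradient ψ x‖ ^ 2 ∂μ))
    ∧ (⨅ γ ∈ {γ : Measure (EuclideanSpace ℝ (Fin d) × EuclideanSpace ℝ (Fin d)) |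
          γ.map Prod.fst = μ ∧ γ.map Prod.snd = μ.map (fun x => x + h • gradient ψ x)},
        ∫⁻ p, (‖p.1 - p.2‖₊ : ENNReal) ^ 2 ∂γ)
        = ENNReal.ofReal (h ^ 2 * ∫ x, ‖gradient ψ x‖ ^ 2 ∂μ) := by
  have hFin : Fact (1 ≤ (2:ℝ)) := ⟨one_le_two⟩
  set g : EuclideanSpace ℝ (Fin d) → EuclideanSpace ℝ (Fin d) := gradient ψ with hg
  set T : EuclideanSpace ℝ (Fin d) → EuclideanSpace ℝ (Fin d) := fun x => x + h • g x with hT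
  set φ : EuclideanSpace ℝ (Fin d) → ℝ := fun x => ‖x‖ ^ 2 / 2 + h * ψ x with hφ
  -- basic facts
  have hgc : Continuous g := grad_cont ψ hψ
  have hTc : Continuous T := continuous_id.add (hgc.const_smul h)
  have hTm : Measurable T := hTc.measurable
  have hφint : Integrable φ μ := (hmom.div_const 2).add (hψint.const_mul h)
  have hnormint : Integrable (fun x => ‖x‖) μ := by
    refine (integrable_const (1:ℝ) |>.add hmom).mono
      (continuous_norm.aestronglyMeasurable) (ae_of_all _ fun x => ?_)
    have h1 : ‖x‖ ≤ 1 + ‖x‖ ^ 2 := by nlinarith [norm_nonneg x]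
    have h2 : (0:ℝ) ≤ 1 + ‖x‖ ^ 2 := by positivity
    simp only [Pi.add_apply, Real.norm_eq_abs]
    rw [abs_of_nonneg (norm_nonneg x), abs_of_nonneg h2]
    exact h1
  have hgnormint : Integrable (fun x => ‖g x‖) μ := by
    refine (integrable_const (1:ℝ) |>.add hgradint).mono
      (hgc.norm.aestronglyMeasurable) (ae_of_all _ fun x => ?_)
    have h1 : ‖g x‖ ≤ 1 + ‖g x‖ ^ 2 := by nlinarith [norm_nonneg (g x)]
    have h2 : (0:ℝ) ≤ 1 + ‖g x‖ ^ 2 := by positivity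
    simp only [Pi.add_apply, Real.norm_eq_abs]
    rw [abs_of_nonneg (norm_nonneg _), abs_of_nonneg h2]
    exact h1
  have hTnorm_int : Integrable (fun x => ‖T x‖) μ := by
    refine (hnormint.add (hgnormint.const_mul |h|)).mono
      ((hTc.norm).aestronglyMeasurable) (ae_of_all _ fun x => ?_)
    have h1 : ‖T x‖ ≤ ‖x‖ + |h| * ‖g x‖ := by
      calc ‖T x‖ ≤ ‖x‖ + ‖h • g x‖ := norm_add_le _ _
        _ = ‖x‖ + |h| * ‖g x‖ := by rw [norm_smul, Real.norm_eq_abs]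
    have h2 : (0:ℝ) ≤ ‖x‖ + |h| * ‖g x‖ := by positivity
    simp only [Pi.add_apply, Real.norm_eq_abs]
    rw [abs_of_nonneg (norm_nonneg _), abs_of_nonneg h2]
    exact h1
  have hTnormsq_int : Integrable (fun x => ‖T x‖ ^ 2) μ := by
    refine ((hmom.const_mul 2).add (hgradint.const_mul (2 * h ^ 2))).mono
      ((hTc.norm.pow 2).aestronglyMeasurable) (ae_of_all _ fun x => ?_)
    have h1 : ‖T x‖ ≤ ‖x‖ + |h| * ‖g x‖ := by
      calc ‖T x‖ ≤ ‖x‖ + ‖h • g x‖ := norm_add_le _ _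
        _ = ‖x‖ + |h| * ‖g x‖ := by rw [norm_smul, Real.norm_eq_abs]
    have h2 : ‖T x‖ ^ 2 ≤ 2 * ‖x‖ ^ 2 + 2 * h ^ 2 * ‖g x‖ ^ 2 := by
      nlinarith [norm_nonneg (T x), norm_nonneg x, norm_nonneg (g x), sq_abs h,
        abs_nonneg h, sq_nonneg (‖x‖ - |h| * ‖g x‖)]
    have h3 : (0:ℝ) ≤ 2 * ‖x‖ ^ 2 + 2 * h ^ 2 * ‖g x‖ ^ 2 := by positivity
    simp only [Pi.add_apply, Real.norm_eq_abs]
    rw [abs_of_nonneg (sq_nonneg ‖T x‖), abs_of_nonneg h3]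
    exact h2
  have hinnerT_int : Integrable (fun x => ⟪x, T x⟫) μ := by
    refine ((hmom.add hTnormsq_int).div_const 2).mono
      ((continuous_id.inner hTc).aestronglyMeasurable) (ae_of_all _ fun x => ?_)
    have h1 : |⟪x, T x⟫| ≤ (‖x‖ ^ 2 + ‖T x‖ ^ 2) / 2 := by
      have := abs_real_inner_le_norm x (T x)
      nlinarith [sq_nonneg (‖x‖ - ‖T x‖)]
    have h2 : (0:ℝ) ≤ (‖x‖ ^ 2 + ‖T x‖ ^ 2) / 2 := by positivity
    simp only [Pi.add_apply, Real.norm_eq_abs]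
    rw [abs_of_nonneg h2]
    exact h1
  -- cost of the induced coupling, as a real integral
  have hcostT : ∫ x, ‖x - T x‖ ^ 2 ∂μ = h ^ 2 * ∫ x, ‖g x‖ ^ 2 ∂μ := by
    rw [← integral_const_mul]
    refine integral_congr_ae (ae_of_all _ fun x => ?_)
    show ‖x - T x‖ ^ 2 = h ^ 2 * ‖g x‖ ^ 2
    have hx : x - T x = -(h • g x) := by simp only [hT]; abel
    rw [hx, norm_neg, norm_smul, Real.norm_eq_abs, mul_pow, sq_abs]
  have hφc : Continuous φ := by
    rw [hφ]; exact ((continuous_norm.pow 2).div_const 2).add (continuous_const.mul hψ.continuous)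
  have hcostmeas : Measurable (fun p : EuclideanSpace ℝ (Fin d) × EuclideanSpace ℝ (Fin d) =>
      ((‖p.1 - p.2‖₊ : ℝ≥0∞)) ^ 2) :=
    ((measurable_fst.sub measurable_snd).nnnorm.coe_nnreal_ennreal).pow_const 2
  have hcost_eq : ∀ p : EuclideanSpace ℝ (Fin d) × EuclideanSpace ℝ (Fin d),
      ((‖p.1 - p.2‖₊ : ℝ≥0∞)) ^ 2 = ENNReal.ofReal (‖p.1 - p.2‖ ^ 2) := fun p => by
    rw [← ENNReal.ofReal_coe_nnreal, coe_nnnorm, ← ENNReal.ofReal_pow (norm_nonneg _)]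
  have hsub_int : Integrable (fun x => ‖x - T x‖ ^ 2) μ := by
    refine (hgradint.const_mul (h ^ 2)).congr (ae_of_all _ fun x => ?_)
    show h ^ 2 * ‖g x‖ ^ 2 = ‖x - T x‖ ^ 2
    have hx : x - T x = -(h • g x) := by simp only [hT]; abel
    rw [hx, norm_neg, norm_smul, Real.norm_eq_abs, mul_pow, sq_abs]
  have hpair : Measurable (fun x : EuclideanSpace ℝ (Fin d) => (x, T x)) := by
    exact measurable_id.prodMk hTm
  -- Part (ii)
  have part2 : ∫⁻ p, (‖p.1 - p.2‖₊ : ℝ≥0∞) ^ 2 ∂(μ.map (fun x => (x, T x)))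
      = ENNReal.ofReal (h ^ 2 * ∫ x, ‖g x‖ ^ 2 ∂μ) := by
    rw [lintegral_map hcostmeas hpair]
    calc ∫⁻ x, (‖x - T x‖₊ : ℝ≥0∞) ^ 2 ∂μ
        = ∫⁻ x, ENNReal.ofReal (‖x - T x‖ ^ 2) ∂μ :=
          lintegral_congr fun x => hcost_eq (x, T x)
      _ = ENNReal.ofReal (∫ x, ‖x - T x‖ ^ 2 ∂μ) :=
          (ofReal_integral_eq_lintegral_ofReal hsub_int
            (ae_of_all _ fun x => sq_nonneg _)).symm
      _ = ENNReal.ofReal (h ^ 2 * ∫ x, ‖g x‖ ^ 2 ∂μ) := by rw [hcostT]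
  -- Part (i)
  have part1 : ∀ γ : Measure (EuclideanSpace ℝ (Fin d) × EuclideanSpace ℝ (Fin d)),
      γ.map Prod.fst = μ → γ.map Prod.snd = μ.map T →
      ENNReal.ofReal (h ^ 2 * ∫ x, ‖g x‖ ^ 2 ∂μ)
        ≤ ∫⁻ p, (‖p.1 - p.2‖₊ : ℝ≥0∞) ^ 2 ∂γ := by
    intro γ hγ1 hγ2
    by_cases htop : ∫⁻ p, (‖p.1 - p.2‖₊ : ℝ≥0∞) ^ 2 ∂γ = ⊤
    · rw [htop]; exact le_top
    have hcγmeas : AEStronglyMeasurable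
        (fun p : EuclideanSpace ℝ (Fin d) × EuclideanSpace ℝ (Fin d) => ‖p.1 - p.2‖ ^ 2) γ :=
      ((continuous_fst.sub continuous_snd).norm.pow 2).aestronglyMeasurable
    have hcγint : Integrable
        (fun p : EuclideanSpace ℝ (Fin d) × EuclideanSpace ℝ (Fin d) => ‖p.1 - p.2‖ ^ 2) γ := by
      refine ⟨hcγmeas, ?_⟩
      show (∫⁻ p, (‖(‖p.1 - p.2‖ ^ 2 : ℝ)‖₊ : ℝ≥0∞) ∂γ) < ⊤
      have heq : (∫⁻ p, (‖(‖p.1 - p.2‖ ^ 2 : ℝ)‖₊ : ℝ≥0∞) ∂γ)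
          = ∫⁻ p, (‖p.1 - p.2‖₊ : ℝ≥0∞) ^ 2 ∂γ := by
        refine lintegral_congr fun p => ?_
        rw [nnnorm_pow, nnnorm_norm, ENNReal.coe_pow]
      rw [heq]
      exact lt_top_iff_ne_top.mpr htop
    have hlintcost : ∫⁻ p, (‖p.1 - p.2‖₊ : ℝ≥0∞) ^ 2 ∂γ
        = ENNReal.ofReal (∫ p, ‖p.1 - p.2‖ ^ 2 ∂γ) := by
      rw [ofReal_integral_eq_lintegral_ofReal hcγint (ae_of_all _ fun p => sq_nonneg _)]
      exact lintegral_congr fun p => hcost_eq p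
    rw [hlintcost]
    apply ENNReal.ofReal_le_ofReal
    -- marginal integrability
    have hfst_sq : Integrable
        (fun p : EuclideanSpace ℝ (Fin d) × EuclideanSpace ℝ (Fin d) => ‖p.1‖ ^ 2) γ := by
      have h1 : Integrable (fun x : EuclideanSpace ℝ (Fin d) => ‖x‖ ^ 2) (γ.map Prod.fst) := by
        rw [hγ1]; exact hmom
      simpa [Function.comp_def] using
        (integrable_map_measure (continuous_norm.pow 2).aestronglyMeasurable
          measurable_fst.aemeasurable).mp h1
    have hν_sq : Integrable (fun y : EuclideanSpace ℝ (Fin d) => ‖y‖ ^ 2) (μ.map T) := by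
      refine (integrable_map_measure (continuous_norm.pow 2).aestronglyMeasurable
        hTm.aemeasurable).mpr ?_
      simpa [Function.comp_def] using hTnormsq_int
    have hsnd_sq : Integrable
        (fun p : EuclideanSpace ℝ (Fin d) × EuclideanSpace ℝ (Fin d) => ‖p.2‖ ^ 2) γ := by
      have h1 : Integrable (fun y : EuclideanSpace ℝ (Fin d) => ‖y‖ ^ 2) (γ.map Prod.snd) := by
        rw [hγ2]; exact hν_sq
      simpa [Function.comp_def] using
        (integrable_map_measure (continuous_norm.pow 2).aestronglyMeasurable
          measurable_snd.aemeasurable).mp h1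
    have hinnerγ : Integrable
        (fun p : EuclideanSpace ℝ (Fin d) × EuclideanSpace ℝ (Fin d) => ⟪p.1, p.2⟫) γ := by
      refine ((hfst_sq.add hsnd_sq).div_const 2).mono
        ((continuous_fst.inner continuous_snd).aestronglyMeasurable) (ae_of_all _ fun p => ?_)
      have h1 : |⟪p.1, p.2⟫| ≤ (‖p.1‖ ^ 2 + ‖p.2‖ ^ 2) / 2 := by
        have := abs_real_inner_le_norm p.1 p.2
        nlinarith [sq_nonneg (‖p.1‖ - ‖p.2‖)]
      have h2 : (0:ℝ) ≤ (‖p.1‖ ^ 2 + ‖p.2‖ ^ 2) / 2 := by positivity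
      simp only [Pi.add_apply, Real.norm_eq_abs]
      rw [abs_of_nonneg h2]
      exact h1
    -- the auxiliary EReal function
    set xs : ℕ → EuclideanSpace ℝ (Fin d) := TopologicalSpace.denseSeq _ with hxs
    set u : EuclideanSpace ℝ (Fin d) × EuclideanSpace ℝ (Fin d) → ℝ :=
      fun p => ⟪p.1, p.2⟫ - φ p.1 with hu
    have hu_cont : Continuous u := by
      rw [hu]; exact (continuous_fst.inner continuous_snd).sub (hφc.comp continuous_fst)
    set g' : EuclideanSpace ℝ (Fin d) → EReal :=
      fun y => ⨆ n, ((u (xs n, y) : ℝ) : EReal) with hg'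
    have hg'meas : Measurable g' := by
      rw [hg']
      exact Measurable.iSup fun n => measurable_coe_real_ereal.comp
        (hu_cont.comp (continuous_const.prodMk continuous_id)).measurable
    have hle_g' : ∀ (n : ℕ) (y : EuclideanSpace ℝ (Fin d)),
        ((u (xs n, y) : ℝ) : EReal) ≤ g' y := by
      intro n y
      rw [hg']
      exact le_iSup (fun n => ((u (xs n, y) : ℝ) : EReal)) n
    have hua : ∀ p : EuclideanSpace ℝ (Fin d) × EuclideanSpace ℝ (Fin d),
        ((u p : ℝ) : EReal) ≤ g' p.2 := by
      intro p
      by_contra hlt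
      push_neg at hlt
      obtain ⟨r, hr1, hr2⟩ := EReal.exists_between_coe_real hlt
      have hopen : IsOpen {x : EuclideanSpace ℝ (Fin d) | r < u (x, p.2)} :=
        isOpen_lt continuous_const (hu_cont.comp (continuous_id.prodMk continuous_const))
      have hne : {x : EuclideanSpace ℝ (Fin d) | r < u (x, p.2)}.Nonempty := by
        refine ⟨p.1, ?_⟩
        have : (r : ℝ) < u p := by exact_mod_cast hr2
        simpa using this
      obtain ⟨n, hn⟩ := (TopologicalSpace.denseRange_denseSeq
        (EuclideanSpace ℝ (Fin d))).exists_mem_open hopen hne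
      have h1 : ((r : ℝ) : EReal) < ((u (xs n, p.2) : ℝ) : EReal) := by exact_mod_cast hn
      exact lt_irrefl _ (hr1.trans (h1.trans_le (hle_g' n p.2)))
    have key2 : ∀ x z : EuclideanSpace ℝ (Fin d), u (x, T z) ≤ u (z, T z) := by
      intro x z
      have hks := key_ineq ψ hψ hL hHess hh x z
      rw [inner_sub_left] at hks
      simp only [hu, hφ, hT, hg] at *
      linarith
    have hub : ∀ z : EuclideanSpace ℝ (Fin d), g' (T z) ≤ ((u (z, T z) : ℝ) : EReal) := by
      intro z
      rw [hg']
      exact iSup_le fun n => EReal.coe_le_coe_iff.mpr (key2 (xs n) z)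
    have hnbot : ∀ y, g' y ≠ ⊥ := by
      intro y hb
      have := hle_g' 0 y
      rw [hb, le_bot_iff] at this
      exact EReal.coe_ne_bot _ this
    have hTz_ne_top : ∀ z, g' (T z) ≠ ⊤ := by
      intro z htop
      have := hub z
      rw [htop, top_le_iff] at this
      exact EReal.coe_ne_top _ this
    have hAmeas : MeasurableSet (g' ⁻¹' {⊤}) := hg'meas (measurableSet_singleton ⊤)
    have hνA : (μ.map T) (g' ⁻¹' {⊤}) = 0 := by
      rw [Measure.map_apply hTm hAmeas]
      have hempty : T ⁻¹' (g' ⁻¹' {⊤}) = ∅ := by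
        ext z
        simp only [Set.mem_preimage, Set.mem_singleton_iff, Set.mem_empty_iff_false, iff_false]
        exact hTz_ne_top z
      rw [hempty, measure_empty]
    have hae : ∀ᵐ p ∂γ, g' p.2 ≠ ⊤ := by
      have hset : {p : EuclideanSpace ℝ (Fin d) × EuclideanSpace ℝ (Fin d) | ¬ g' p.2 ≠ ⊤}
          = Prod.snd ⁻¹' (g' ⁻¹' {⊤}) := by
        ext p; simp
      rw [ae_iff, hset, ← Measure.map_apply measurable_snd hAmeas, hγ2]
      exact hνA
    set G : EuclideanSpace ℝ (Fin d) → ℝ := fun y => (g' y).toReal with hG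
    have hGmeas : Measurable G := measurable_ereal_toReal.comp hg'meas
    have hGT_ub : ∀ z, G (T z) ≤ u (z, T z) := by
      intro z
      have h2 := EReal.toReal_le_toReal (hub z) (hnbot _) (EReal.coe_ne_top _)
      simpa [hG] using h2
    have hGT_lb : ∀ z, u (xs 0, T z) ≤ G (T z) := by
      intro z
      have h2 := EReal.toReal_le_toReal (hle_g' 0 (T z)) (EReal.coe_ne_bot _) (hTz_ne_top z)
      simpa [hG] using h2
    have huzT : Integrable (fun z => u (z, T z)) μ := by
      simp only [hu]; exact hinnerT_int.sub hφint
    have hu0T : Integrable (fun z => u (xs 0, T z)) μ := by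
      simp only [hu]
      refine Integrable.sub ?_ (integrable_const _)
      refine (hTnorm_int.const_mul ‖xs 0‖).mono
        ((continuous_const.inner hTc).aestronglyMeasurable) (ae_of_all _ fun z => ?_)
      have h1 : |⟪xs 0, T z⟫| ≤ ‖xs 0‖ * ‖T z‖ := abs_real_inner_le_norm _ _
      have h2 : (0:ℝ) ≤ ‖xs 0‖ * ‖T z‖ := by positivity
      simp only [Real.norm_eq_abs]
      rw [abs_of_nonneg h2]
      exact h1
    have hGT_int : Integrable (fun z => G (T z)) μ := by
      refine (huzT.abs.add hu0T.abs).mono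
        ((hGmeas.comp hTm).aestronglyMeasurable) (ae_of_all _ fun z => ?_)
      have h1 := hGT_ub z
      have h2 := hGT_lb z
      have h3 : |G (T z)| ≤ |u (z, T z)| + |u (xs 0, T z)| := by
        rcases abs_cases (G (T z)) with ⟨he, _⟩ | ⟨he, _⟩ <;>
          [skip; skip] <;>
        · rw [he]
          have := le_abs_self (u (z, T z))
          have := neg_abs_le (u (xs 0, T z))
          have := abs_nonneg (u (z, T z))
          have := abs_nonneg (u (xs 0, T z))
          linarith
      have h4 : (0:ℝ) ≤ |u (z, T z)| + |u (xs 0, T z)| := by positivity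
      simp only [Pi.add_apply, Real.norm_eq_abs]
      rw [abs_of_nonneg h4]
      exact h3
    have hGν_int : Integrable G (μ.map T) := by
      refine (integrable_map_measure hGmeas.aestronglyMeasurable hTm.aemeasurable).mpr ?_
      simpa [Function.comp_def] using hGT_int
    have hGsnd_int : Integrable
        (fun p : EuclideanSpace ℝ (Fin d) × EuclideanSpace ℝ (Fin d) => G p.2) γ := by
      have h1 : Integrable G (γ.map Prod.snd) := by rw [hγ2]; exact hGν_int
      simpa [Function.comp_def] using
        (integrable_map_measure hGmeas.aestronglyMeasurable measurable_snd.aemeasurable).mp h1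
    have hφfst_int : Integrable
        (fun p : EuclideanSpace ℝ (Fin d) × EuclideanSpace ℝ (Fin d) => φ p.1) γ := by
      have h1 : Integrable φ (γ.map Prod.fst) := by rw [hγ1]; exact hφint
      simpa [Function.comp_def] using
        (integrable_map_measure hφc.aestronglyMeasurable measurable_fst.aemeasurable).mp h1
    have huγ_int : Integrable u γ := by
      simp only [hu]; exact hinnerγ.sub hφfst_int
    have step1 : ∫ p, u p ∂γ ≤ ∫ p, G p.2 ∂γ := by
      refine integral_mono_ae huγ_int hGsnd_int ?_
      filter_upwards [hae] with p hp
      have h2 := EReal.toReal_le_toReal (hua p) (EReal.coe_ne_bot _) hp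
      simpa [hG] using h2
    have step2 : ∫ p, G p.2 ∂γ = ∫ y, G y ∂(μ.map T) := by
      rw [← hγ2, integral_map measurable_snd.aemeasurable hGmeas.aestronglyMeasurable]
    have step3 : ∫ y, G y ∂(μ.map T) = ∫ z, G (T z) ∂μ :=
      integral_map hTm.aemeasurable hGmeas.aestronglyMeasurable
    have step4 : ∫ z, G (T z) ∂μ ≤ ∫ z, u (z, T z) ∂μ :=
      integral_mono hGT_int huzT fun z => hGT_ub z
    have hφγ : ∫ p, φ p.1 ∂γ = ∫ x, φ x ∂μ := by
      have h1 : ∫ x, φ x ∂(γ.map Prod.fst)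
          = ∫ p, φ p.1 ∂γ :=
        integral_map measurable_fst.aemeasurable hφc.aestronglyMeasurable
      rw [hγ1] at h1
      exact h1.symm
    have hinner_le : ∫ p, ⟪p.1, p.2⟫ ∂γ ≤ ∫ z, ⟪z, T z⟫ ∂μ := by
      have e1 : ∫ p, u p ∂γ = ∫ p, ⟪p.1, p.2⟫ ∂γ - ∫ p, φ p.1 ∂γ := by
        simp only [hu]; exact integral_sub hinnerγ hφfst_int
      have e2 : ∫ z, u (z, T z) ∂μ = ∫ z, ⟪z, T z⟫ ∂μ - ∫ z, φ z ∂μ := by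
        simp only [hu]; exact integral_sub hinnerT_int hφint
      have := (step1.trans_eq (step2.trans step3)).trans step4
      rw [e1, e2, hφγ] at this
      linarith
    -- expansion of the quadratic cost
    have hfstγ : ∫ p, ‖p.1‖ ^ 2 ∂γ = ∫ x, ‖x‖ ^ 2 ∂μ := by
      have h1 : ∫ x, ‖x‖ ^ 2 ∂(γ.map Prod.fst) = ∫ p, ‖p.1‖ ^ 2 ∂γ :=
        integral_map measurable_fst.aemeasurable (continuous_norm.pow 2).aestronglyMeasurable
      rw [hγ1] at h1
      exact h1.symm
    have hsndγ : ∫ p, ‖p.2‖ ^ 2 ∂γ = ∫ z, ‖T z‖ ^ 2 ∂μ := by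
      have h1 : ∫ y, ‖y‖ ^ 2 ∂(γ.map Prod.snd) = ∫ p, ‖p.2‖ ^ 2 ∂γ :=
        integral_map measurable_snd.aemeasurable (continuous_norm.pow 2).aestronglyMeasurable
      have h2 : ∫ y, ‖y‖ ^ 2 ∂(μ.map T) = ∫ z, ‖T z‖ ^ 2 ∂μ :=
        integral_map hTm.aemeasurable (continuous_norm.pow 2).aestronglyMeasurable
      rw [hγ2, h2] at h1
      exact h1.symm
    have hexpγ : ∫ p, ‖p.1 - p.2‖ ^ 2 ∂γ
        = ∫ p, ‖p.1‖ ^ 2 ∂γ - 2 * ∫ p, ⟪p.1, p.2⟫ ∂γ + ∫ p, ‖p.2‖ ^ 2 ∂γ := by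
      calc ∫ p, ‖p.1 - p.2‖ ^ 2 ∂γ
          = ∫ p, (‖p.1‖ ^ 2 - 2 * ⟪p.1, p.2⟫ + ‖p.2‖ ^ 2) ∂γ :=
            integral_congr_ae (ae_of_all _ fun p => norm_sub_sq_real _ _)
        _ = ∫ p, ‖p.1‖ ^ 2 ∂γ - 2 * ∫ p, ⟪p.1, p.2⟫ ∂γ + ∫ p, ‖p.2‖ ^ 2 ∂γ := by
            have hA : Integrable (fun p : EuclideanSpace ℝ (Fin d) × EuclideanSpace ℝ (Fin d) =>
                ‖p.1‖ ^ 2 - 2 * ⟪p.1, p.2⟫) γ := by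
              exact hfst_sq.sub (hinnerγ.const_mul 2)
            rw [integral_add hA hsnd_sq,
              integral_sub hfst_sq (hinnerγ.const_mul 2), integral_const_mul]
    have hexpμ : ∫ z, ‖z - T z‖ ^ 2 ∂μ
        = ∫ z, ‖z‖ ^ 2 ∂μ - 2 * ∫ z, ⟪z, T z⟫ ∂μ + ∫ z, ‖T z‖ ^ 2 ∂μ := by
      calc ∫ z, ‖z - T z‖ ^ 2 ∂μ
          = ∫ z, (‖z‖ ^ 2 - 2 * ⟪z, T z⟫ + ‖T z‖ ^ 2) ∂μ :=
            integral_congr_ae (ae_of_all _ fun z => norm_sub_sq_real _ _)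
        _ = ∫ z, ‖z‖ ^ 2 ∂μ - 2 * ∫ z, ⟪z, T z⟫ ∂μ + ∫ z, ‖T z‖ ^ 2 ∂μ := by
            have hA : Integrable (fun z : EuclideanSpace ℝ (Fin d) =>
                ‖z‖ ^ 2 - 2 * ⟪z, T z⟫) μ := by
              exact hmom.sub (hinnerT_int.const_mul 2)
            rw [integral_add hA hTnormsq_int,
              integral_sub hmom (hinnerT_int.const_mul 2), integral_const_mul]
    rw [← hcostT, hexpμ, hexpγ, hfstγ, hsndγ]
    linarith
  refine ⟨part1, part2, ?_⟩
  -- Part (iii)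
  apply le_antisymm
  · have hmem : (μ.map (fun x => (x, T x))) ∈
        {γ : Measure (EuclideanSpace ℝ (Fin d) × EuclideanSpace ℝ (Fin d)) |
          γ.map Prod.fst = μ ∧ γ.map Prod.snd = μ.map T} := by
      constructor
      · rw [Measure.map_map measurable_fst hpair]
        have : (Prod.fst ∘ fun x : EuclideanSpace ℝ (Fin d) => (x, T x)) = id := rfl
        rw [this, Measure.map_id]
      · rw [Measure.map_map measurable_snd hpair]
        rfl
    exact (iInf₂_le (μ.map (fun x => (x, T x))) hmem).trans (le_of_eq part2)
  · exact le_iInf₂ fun γ hγ => part1 γ hγ.1 hγ.2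
end

section
/- For all vectors u, v ∈ ℝ^k the identity 2‖u u^⊤ − v v^⊤‖_F² − ‖u − v‖⁴ = (‖u‖² − ‖v‖²)² + 4⟨u, v⟩·‖u − v‖² holds. In particular, if ⟨u, v⟩ ≥ 0 then ‖u − v‖⁴ ≤ 2‖u u^⊤ − v v^⊤‖_F², i.e. ‖(u−v)(u−v)^⊤‖_F² ≤ 2‖u u^⊤ − v v^⊤‖_F². -/
open Finset

/-- Outer-product identity: for `u, v ∈ ℝ^k`,
`2‖u uᵀ − v vᵀ‖_F² − ‖u − v‖⁴ = (‖u‖² − ‖v‖²)² + 4⟨u,v⟩‖u − v‖²`, and in particular if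
`⟨u,v⟩ ≥ 0` then `‖(u−v)(u−v)ᵀ‖_F² = ‖u − v‖⁴ ≤ 2‖u uᵀ − v vᵀ‖_F²`. Here the squared
Frobenius norm of a `k × k` matrix is written as the double sum of squared entries. -/
theorem outer_product_frobenius_identity {k : ℕ} (u v : EuclideanSpace ℝ (Fin k)) :
    (2 * (∑ i : Fin k, ∑ j : Fin k, (u i * u j - v i * v j) ^ 2) - ‖u - v‖ ^ 4
        = (‖u‖ ^ 2 - ‖v‖ ^ 2) ^ 2 + 4 * (inner ℝ u v : ℝ) * ‖u - v‖ ^ 2)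
    ∧ (0 ≤ (inner ℝ u v : ℝ) →
        (∑ i : Fin k, ∑ j : Fin k, ((u - v) i * (u - v) j) ^ 2) = ‖u - v‖ ^ 4
        ∧ ‖u - v‖ ^ 4 ≤ 2 * ∑ i : Fin k, ∑ j : Fin k, (u i * u j - v i * v j) ^ 2) := by
  have hnorm : ∀ w : EuclideanSpace ℝ (Fin k), ‖w‖ ^ 2 = ∑ i, w i ^ 2 := by
    intro w
    rw [← real_inner_self_eq_norm_sq, PiLp.inner_apply]
    simp [sq]
  have hinner : (inner ℝ u v : ℝ) = ∑ i, u i * v i := by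
    rw [PiLp.inner_apply]; simp [mul_comm]
  have hsub : ∀ i, (u - v) i = u i - v i := fun i => rfl
  have key : ∑ i : Fin k, ∑ j : Fin k, (u i * u j - v i * v j) ^ 2
      = (∑ i, u i ^ 2) ^ 2 + (∑ i, v i ^ 2) ^ 2 - 2 * (∑ i, u i * v i) ^ 2 := by
    have : ∀ i j, (u i * u j - v i * v j) ^ 2
        = u i ^ 2 * u j ^ 2 + v i ^ 2 * v j ^ 2 - 2 * ((u i * v i) * (u j * v j)) := by
      intro i j; ring
    simp_rw [this, Finset.sum_sub_distrib, Finset.sum_add_distrib, ← Finset.mul_sum,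
      ← Finset.sum_mul]
    ring
  have key2 : ∑ i : Fin k, ∑ j : Fin k, ((u - v) i * (u - v) j) ^ 2
      = (∑ i, (u i - v i) ^ 2) ^ 2 := by
    simp_rw [PiLp.sub_apply, mul_pow, ← Finset.mul_sum, ← Finset.sum_mul]
    ring
  have hd : ‖u - v‖ ^ 2 = ∑ i, (u i - v i) ^ 2 := by
    rw [hnorm]; simp [PiLp.sub_apply]
  have hd2 : ∑ i, (u i - v i) ^ 2
      = (∑ i, u i ^ 2) + (∑ i, v i ^ 2) - 2 * (∑ i, u i * v i) := by
    have h : ∀ i, (u i - v i) ^ 2 = u i ^ 2 + v i ^ 2 - 2 * (u i * v i) := fun i => by ring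
    simp_rw [h, Finset.sum_sub_distrib, Finset.sum_add_distrib, ← Finset.mul_sum]
  have h4 : ‖u - v‖ ^ 4 = (∑ i, (u i - v i) ^ 2) ^ 2 := by
    rw [show (4 : ℕ) = 2 * 2 from rfl, pow_mul, hd]
  constructor
  · rw [key, h4, hd2, hnorm u, hnorm v, hinner, hd, hd2]; ring
  · intro hpos
    constructor
    · rw [key2, h4]
    · rw [key, h4, hd2]
      have hn : 0 ≤ ∑ i, (u i - v i) ^ 2 := Finset.sum_nonneg fun i _ => sq_nonneg _
      rw [hinner] at hpos
      nlinarith [sq_nonneg ((∑ i, u i ^ 2) - (∑ i, v i ^ 2)), hd2, hn]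
end

section
/- For u, v ∈ ℝ^k define u_t = u + t(v − u) for t ∈ ℝ and g(t) = (1/2)‖u_t u_t^⊤ − v v^⊤‖_F². Then g is a polynomial function of t and its derivatives at t = 0 satisfy g''(0) = ‖v − u‖⁴ − 3‖u u^⊤ − v v^⊤‖_F² − 4·g'(0). -/
open Finset Polynomial

lemma quad_sum {k : ℕ} (x y : Fin k → ℝ) :
    ∑ i : Fin k, ∑ j : Fin k, (x i * x j - y i * y j) ^ 2
      = (∑ i : Fin k, x i ^ 2) ^ 2 - 2 * (∑ i : Fin k, x i * y i) ^ 2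
        + (∑ i : Fin k, y i ^ 2) ^ 2 := by
  have h : ∀ i j : Fin k, (x i * x j - y i * y j) ^ 2
      = x i ^ 2 * x j ^ 2 - 2 * ((x i * y i) * (x j * y j)) + y i ^ 2 * y j ^ 2 := by
    intro i j; ring
  simp_rw [h, Finset.sum_add_distrib, Finset.sum_sub_distrib, ← Finset.mul_sum]
  simp_rw [← Finset.sum_mul]
  ring

/-- Along the linear interpolation `u_t = u + t(v−u)`, the function
`g(t) = (1/2)‖u_t u_tᵀ − v vᵀ‖_F²` is a polynomial in `t` and satisfies
`g''(0) = ‖v − u‖⁴ − 3‖u uᵀ − v vᵀ‖_F² − 4 g'(0)`. The squared Frobenius norm of a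
`k × k` matrix is written as the double sum of squared entries. -/
theorem second_deriv_matrix_decomposition {k : ℕ} (u v : EuclideanSpace ℝ (Fin k))
    (g : ℝ → ℝ)
    (hg : ∀ t : ℝ, g t = (1 / 2 : ℝ) *
      ∑ i : Fin k, ∑ j : Fin k,
        ((u i + t * (v i - u i)) * (u j + t * (v j - u j)) - v i * v j) ^ 2) :
    (∃ p : Polynomial ℝ, ∀ t, g t = p.eval t)
    ∧ deriv (deriv g) 0
        = ‖v - u‖ ^ 4
          - 3 * (∑ i : Fin k, ∑ j : Fin k, (u i * u j - v i * v j) ^ 2)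
          - 4 * deriv g 0 := by
  set p := ∑ i : Fin k, u i ^ 2 with hp
  set q := ∑ i : Fin k, v i ^ 2 with hq
  set r := ∑ i : Fin k, u i * v i with hr
  -- coefficients
  set A0 := (1/2) * (p^2 - 2*r^2 + q^2) with hA0
  set A1 := 2*(r-p)*p - 2*r*(q-r) with hA1
  set A2 := 2*(r-p)^2 + p*(p+q-2*r) - (q-r)^2 with hA2
  set A3 := 2*(r-p)*(p+q-2*r) with hA3
  set A4 := (1/2)*(p+q-2*r)^2 with hA4
  set P : Polynomial ℝ := C A0 + C A1 * X + C A2 * X^2 + C A3 * X^3 + C A4 * X^4 with hP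
  have key : ∀ t, g t = P.eval t := by
    intro t
    rw [hg t]
    have e1 : ∑ i : Fin k, ∑ j : Fin k,
        ((u i + t * (v i - u i)) * (u j + t * (v j - u j)) - v i * v j) ^ 2
        = (∑ i : Fin k, (u i + t * (v i - u i)) ^ 2) ^ 2
          - 2 * (∑ i : Fin k, (u i + t * (v i - u i)) * v i) ^ 2
          + (∑ i : Fin k, v i ^ 2) ^ 2 :=
      quad_sum (fun i => u i + t * (v i - u i)) v
    have e2 : ∑ i : Fin k, (u i + t * (v i - u i)) ^ 2
        = p + 2*t*(r-p) + t^2*(p+q-2*r) := by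
      have : ∀ i, (u i + t * (v i - u i)) ^ 2
          = u i ^ 2 + (2*t)*(u i * v i - u i ^ 2) + t^2*(u i ^2 + v i ^2 - 2*(u i * v i)) := by
        intro i; ring
      simp_rw [this, Finset.sum_add_distrib, ← Finset.mul_sum, Finset.sum_sub_distrib,
        ← Finset.mul_sum]
      rw [Finset.sum_add_distrib]
    have e3 : ∑ i : Fin k, (u i + t * (v i - u i)) * v i = r + t*(q - r) := by
      have : ∀ i, (u i + t * (v i - u i)) * v i
          = u i * v i + t * (v i ^ 2 - u i * v i) := by intro i; ring
      simp_rw [this, Finset.sum_add_distrib, ← Finset.mul_sum, Finset.sum_sub_distrib]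
      rw [hr, hq]
    rw [e1, e2, e3, hP]
    simp only [Polynomial.eval_add, Polynomial.eval_mul, Polynomial.eval_C,
      Polynomial.eval_X, Polynomial.eval_pow]
    rw [hA0, hA1, hA2, hA3, hA4, ← hq]
    ring
  refine ⟨⟨P, key⟩, ?_⟩
  have hgP : g = fun t => P.eval t := funext key
  have hd1 : deriv g = fun t => (P.derivative).eval t := by
    rw [hgP]; funext t; exact Polynomial.deriv _
  have hd2 : deriv (deriv g) = fun t => (P.derivative.derivative).eval t := by
    rw [hd1]; funext t; exact Polynomial.deriv _
  have hdg0 : deriv g 0 = A1 := by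
    rw [hd1, hP]; simp
  have hddg0 : deriv (deriv g) 0 = 2 * A2 := by
    rw [hd2, hP]; simp; ring
  have hnorm : ‖v - u‖ ^ 2 = p + q - 2*r := by
    rw [EuclideanSpace.norm_eq]
    rw [Real.sq_sqrt (by positivity)]
    have : ∀ i, ‖(v - u) i‖ ^ 2 = v i ^2 + u i ^2 - 2*(u i * v i) := by
      intro i
      simp only [PiLp.sub_apply, Real.norm_eq_abs, sq_abs]
      ring
    simp_rw [this, Finset.sum_sub_distrib, Finset.sum_add_distrib, ← Finset.mul_sum]
    ring
  have hnorm4 : ‖v - u‖ ^ 4 = (p + q - 2*r)^2 := by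
    rw [show (4:ℕ) = 2*2 from rfl, pow_mul, hnorm]
  have hsum : ∑ i : Fin k, ∑ j : Fin k, (u i * u j - v i * v j) ^ 2
      = p^2 - 2*r^2 + q^2 := quad_sum u v
  rw [hddg0, hdg0, hnorm4, hsum, hA1, hA2]
  ring
end

section
/- Let (Z, m) be a measure space and let u, v : Z → ℝ^k be measurable maps with ∫‖u(z)‖⁴ dm(z) < ∞, ∫‖v(z)‖⁴ dm(z) < ∞, and ⟨u(z), v(z)⟩ ≥ 0 for m-almost every z. Define G(t) = (1/2)·∫ ‖(u(z) + t(v(z) − u(z)))(u(z) + t(v(z) − u(z)))^⊤ − v(z) v(z)^⊤‖_F² dm(z) for t ∈ ℝ. Then G is twice differentiable and G''(0) ≤ −∫ ‖u(z) u(z)^⊤ − v(z) v(z)^⊤‖_F² dm(z) − 4·G'(0). -/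
open MeasureTheory Finset

lemma poly_aux {Z : Type*} [MeasurableSpace Z] (m : Measure Z) (P Q R : Z → ℝ)
    (hPm : Measurable P) (hQm : Measurable Q) (hRm : Measurable R)
    (hP0 : ∀ z, 0 ≤ P z) (hQ0 : ∀ z, 0 ≤ Q z)
    (hCS : ∀ z, R z ^ 2 ≤ P z * Q z)
    (hPi : Integrable (fun z => P z ^ 2) m) (hQi : Integrable (fun z => Q z ^ 2) m)
    (hpos : ∀ᵐ z ∂m, 0 ≤ R z)
    (G : ℝ → ℝ)
    (hG : ∀ t : ℝ, G t = (1/2 : ℝ) * ∫ z,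
      ((P z + 2*t*(R z - P z) + t^2*(P z + Q z - 2*R z))^2 + Q z^2
        - 2*(R z + t*(Q z - R z))^2) ∂m) :
    Differentiable ℝ G ∧ Differentiable ℝ (deriv G) ∧
    deriv (deriv G) 0
      ≤ -(∫ z, (P z^2 + Q z^2 - 2*R z^2) ∂m) - 4 * deriv G 0 := by
  -- bound on R
  have hRabs : ∀ z, |R z| ≤ (P z + Q z) / 2 := by
    intro z
    have h1 : R z ^ 2 ≤ ((P z + Q z)/2) ^ 2 := by nlinarith [hCS z, sq_nonneg (P z - Q z)]
    exact abs_le_of_sq_le_sq h1 (by nlinarith [hP0 z, hQ0 z])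
  -- integrability of monomials
  have hsum : Integrable (fun z => P z ^ 2 + Q z ^ 2) m := hPi.add hQi
  have hPQi : Integrable (fun z => P z * Q z) m := by
    refine hsum.mono' ((hPm.mul hQm).aestronglyMeasurable) (ae_of_all _ fun z => ?_)
    rw [Real.norm_eq_abs, abs_of_nonneg (mul_nonneg (hP0 z) (hQ0 z))]
    nlinarith [sq_nonneg (P z - Q z)]
  have hR2i : Integrable (fun z => R z ^ 2) m := by
    have hm : AEStronglyMeasurable (fun z => R z ^ 2) m := by
      exact (hRm.pow_const 2).aestronglyMeasurable
    refine hsum.mono' hm (ae_of_all _ fun z => ?_)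
    rw [Real.norm_eq_abs, abs_of_nonneg (sq_nonneg _)]
    nlinarith [hCS z, sq_nonneg (P z - Q z)]
  have hPRi : Integrable (fun z => P z * R z) m := by
    refine hsum.mono' ((hPm.mul hRm).aestronglyMeasurable) (ae_of_all _ fun z => ?_)
    rw [Real.norm_eq_abs, abs_mul, abs_of_nonneg (hP0 z)]
    nlinarith [hRabs z, hP0 z, hQ0 z, abs_nonneg (R z), sq_nonneg (P z - Q z)]
  have hQRi : Integrable (fun z => Q z * R z) m := by
    refine hsum.mono' ((hQm.mul hRm).aestronglyMeasurable) (ae_of_all _ fun z => ?_)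
    rw [Real.norm_eq_abs, abs_mul, abs_of_nonneg (hQ0 z)]
    nlinarith [hRabs z, hP0 z, hQ0 z, abs_nonneg (R z), sq_nonneg (P z - Q z)]
  -- coefficient functions
  set c0 : Z → ℝ := fun z => P z^2 + Q z^2 - 2*R z^2 with hc0
  set c1 : Z → ℝ := fun z => 4*(P z*R z) - 4*P z^2 - 4*(Q z*R z) + 4*R z^2 with hc1
  set c2 : Z → ℝ := fun z => 6*P z^2 + 2*(P z*Q z) - 12*(P z*R z) + 2*R z^2
      - 2*Q z^2 + 4*(Q z*R z) with hc2
  set c3 : Z → ℝ := fun z => 12*(P z*R z) + 4*(Q z*R z) - 8*R z^2 - 4*P z^2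
      - 4*(P z*Q z) with hc3
  set c4 : Z → ℝ := fun z => P z^2 + Q z^2 + 4*R z^2 + 2*(P z*Q z) - 4*(P z*R z)
      - 4*(Q z*R z) with hc4
  have hpt : ∀ (t : ℝ) z,
      (P z + 2*t*(R z - P z) + t^2*(P z + Q z - 2*R z))^2 + Q z^2
        - 2*(R z + t*(Q z - R z))^2
      = c0 z + c1 z * t + c2 z * t^2 + c3 z * t^3 + c4 z * t^4 := by
    intro t z; simp only [hc0, hc1, hc2, hc3, hc4]; ring
  have hc0i : Integrable c0 m := (hPi.add hQi).sub (hR2i.const_mul 2)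
  have hc1i : Integrable c1 m :=
    (((hPRi.const_mul 4).sub (hPi.const_mul 4)).sub (hQRi.const_mul 4)).add (hR2i.const_mul 4)
  have hc2i : Integrable c2 m :=
    (((((hPi.const_mul 6).add (hPQi.const_mul 2)).sub (hPRi.const_mul 12)).add
      (hR2i.const_mul 2)).sub (hQi.const_mul 2)).add (hQRi.const_mul 4)
  have hc3i : Integrable c3 m :=
    ((((hPRi.const_mul 12).add (hQRi.const_mul 4)).sub (hR2i.const_mul 8)).sub
      (hPi.const_mul 4)).sub (hPQi.const_mul 4)
  have hc4i : Integrable c4 m :=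
    ((((hPi.add hQi).add (hR2i.const_mul 4)).add (hPQi.const_mul 2)).sub
      (hPRi.const_mul 4)).sub (hQRi.const_mul 4)
  -- split the integral
  have h1t : ∀ t : ℝ, Integrable (fun z => c1 z * t) m := fun t => hc1i.mul_const t
  have h2t : ∀ t : ℝ, Integrable (fun z => c2 z * t^2) m := fun t => hc2i.mul_const _
  have h3t : ∀ t : ℝ, Integrable (fun z => c3 z * t^3) m := fun t => hc3i.mul_const _
  have h4t : ∀ t : ℝ, Integrable (fun z => c4 z * t^4) m := fun t => hc4i.mul_const _
  set a : ℝ := (1/2) * ∫ z, c0 z ∂m with ha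
  set b : ℝ := (1/2) * ∫ z, c1 z ∂m with hb
  set c : ℝ := (1/2) * ∫ z, c2 z ∂m with hc
  set d : ℝ := (1/2) * ∫ z, c3 z ∂m with hd
  set e : ℝ := (1/2) * ∫ z, c4 z ∂m with he
  have hGt : ∀ t : ℝ, G t = a + b*t + c*t^2 + d*t^3 + e*t^4 := by
    intro t
    have e1 : ∫ z, ((P z + 2*t*(R z - P z) + t^2*(P z + Q z - 2*R z))^2 + Q z^2
        - 2*(R z + t*(Q z - R z))^2) ∂m
        = ∫ z, (c0 z + c1 z * t + c2 z * t^2 + c3 z * t^3 + c4 z * t^4) ∂m :=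
      integral_congr_ae (ae_of_all _ fun z => hpt t z)
    have e2 : ∫ z, (c0 z + c1 z * t + c2 z * t^2 + c3 z * t^3 + c4 z * t^4) ∂m
        = (∫ z, c0 z ∂m) + (∫ z, c1 z ∂m)*t + (∫ z, c2 z ∂m)*t^2
          + (∫ z, c3 z ∂m)*t^3 + (∫ z, c4 z ∂m)*t^4 := by
      have s4 : ∫ z, (c0 z + c1 z * t + c2 z * t^2 + c3 z * t^3 + c4 z * t^4) ∂m
          = (∫ z, (c0 z + c1 z * t + c2 z * t^2 + c3 z * t^3) ∂m) + ∫ z, c4 z * t^4 ∂m :=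
        integral_add (((hc0i.add (h1t t)).add (h2t t)).add (h3t t)) (h4t t)
      have s3 : ∫ z, (c0 z + c1 z * t + c2 z * t^2 + c3 z * t^3) ∂m
          = (∫ z, (c0 z + c1 z * t + c2 z * t^2) ∂m) + ∫ z, c3 z * t^3 ∂m :=
        integral_add ((hc0i.add (h1t t)).add (h2t t)) (h3t t)
      have s2 : ∫ z, (c0 z + c1 z * t + c2 z * t^2) ∂m
          = (∫ z, (c0 z + c1 z * t) ∂m) + ∫ z, c2 z * t^2 ∂m :=
        integral_add (hc0i.add (h1t t)) (h2t t)
      have s1 : ∫ z, (c0 z + c1 z * t) ∂m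
          = (∫ z, c0 z ∂m) + ∫ z, c1 z * t ∂m :=
        integral_add hc0i (h1t t)
      have m1 : ∫ z, c1 z * t ∂m = (∫ z, c1 z ∂m) * t := integral_mul_const t _
      have m2 : ∫ z, c2 z * t^2 ∂m = (∫ z, c2 z ∂m) * t^2 := integral_mul_const _ _
      have m3 : ∫ z, c3 z * t^3 ∂m = (∫ z, c3 z ∂m) * t^3 := integral_mul_const _ _
      have m4 : ∫ z, c4 z * t^4 ∂m = (∫ z, c4 z ∂m) * t^4 := integral_mul_const _ _
      rw [s4, s3, s2, s1, m1, m2, m3, m4]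
    rw [hG t, e1, e2, ha, hb, hc, hd, he]; ring
  have hGe : G = fun s : ℝ => a + b*s + c*s^2 + d*s^3 + e*s^4 := funext hGt
  -- first derivative
  have hd1 : ∀ t : ℝ, HasDerivAt G (b + 2*c*t + 3*d*t^2 + 4*e*t^3) t := by
    intro t
    rw [hGe]
    have h0 := hasDerivAt_const t a
    have hb' : HasDerivAt (fun s : ℝ => b*s) b t := by
      simpa using (hasDerivAt_id t).const_mul b
    have hc' : HasDerivAt (fun s : ℝ => c*s^2) (2*c*t) t := by
      have := (hasDerivAt_pow 2 t).const_mul c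
      refine this.congr_deriv ?_
      push_cast; ring
    have hd' : HasDerivAt (fun s : ℝ => d*s^3) (3*d*t^2) t := by
      have := (hasDerivAt_pow 3 t).const_mul d
      refine this.congr_deriv ?_
      push_cast; ring
    have he' : HasDerivAt (fun s : ℝ => e*s^4) (4*e*t^3) t := by
      have := (hasDerivAt_pow 4 t).const_mul e
      refine this.congr_deriv ?_
      push_cast; ring
    have := (((h0.add hb').add hc').add hd').add he'
    exact this.congr_deriv (by ring)
  have hdiff : Differentiable ℝ G := fun t => (hd1 t).differentiableAt
  have hderiv : deriv G = fun t : ℝ => b + 2*c*t + 3*d*t^2 + 4*e*t^3 :=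
    funext fun t => (hd1 t).deriv
  -- second derivative
  have hd2 : ∀ t : ℝ, HasDerivAt (deriv G) (2*c + 6*d*t + 12*e*t^2) t := by
    intro t
    rw [hderiv]
    have h0 := hasDerivAt_const t b
    have hc' : HasDerivAt (fun s : ℝ => 2*c*s) (2*c) t := by
      simpa using (hasDerivAt_id t).const_mul (2*c)
    have hd' : HasDerivAt (fun s : ℝ => 3*d*s^2) (6*d*t) t := by
      have := (hasDerivAt_pow 2 t).const_mul (3*d)
      refine this.congr_deriv ?_
      push_cast; ring
    have he' : HasDerivAt (fun s : ℝ => 4*e*s^3) (12*e*t^2) t := by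
      have := (hasDerivAt_pow 3 t).const_mul (4*e)
      refine this.congr_deriv ?_
      push_cast; ring
    have := ((h0.add hc').add hd').add he'
    exact this.congr_deriv (by ring)
  have hdiff2 : Differentiable ℝ (deriv G) := fun t => (hd2 t).differentiableAt
  have hderivG0 : deriv G 0 = b := by rw [hderiv]; norm_num
  have hderiv2G0 : deriv (deriv G) 0 = 2*c := by
    have := (hd2 0).deriv
    simpa using this
  refine ⟨hdiff, hdiff2, ?_⟩
  rw [hderivG0, hderiv2G0]
  -- pointwise inequality and integration
  have hae : ∀ᵐ z ∂m, c0 z + 2*c1 z + c2 z ≤ 0 := by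
    filter_upwards [hpos] with z hz
    have h2r : R z ≤ (P z + Q z)/2 := le_of_abs_le (hRabs z)
    simp only [hc0, hc1, hc2]
    nlinarith [sq_nonneg (P z - Q z),
      mul_nonneg hz (by linarith : (0:ℝ) ≤ P z + Q z - 2*R z)]
  have hint : ∫ z, (c0 z + 2*c1 z + c2 z) ∂m ≤ 0 := integral_nonpos_of_ae hae
  have hsplit2 : ∫ z, (c0 z + 2*c1 z + c2 z) ∂m
      = (∫ z, c0 z ∂m) + 2*(∫ z, c1 z ∂m) + (∫ z, c2 z ∂m) := by
    have s2 : ∫ z, (c0 z + 2*c1 z + c2 z) ∂m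
        = (∫ z, (c0 z + 2*c1 z) ∂m) + ∫ z, c2 z ∂m :=
      integral_add (hc0i.add (hc1i.const_mul 2)) hc2i
    have s1 : ∫ z, (c0 z + 2*c1 z) ∂m = (∫ z, c0 z ∂m) + ∫ z, 2*c1 z ∂m :=
      integral_add hc0i (hc1i.const_mul 2)
    have m1 : ∫ z, 2*c1 z ∂m = 2 * ∫ z, c1 z ∂m := integral_const_mul _ _
    rw [s2, s1, m1]
  rw [hsplit2] at hint
  have : integral m c0 = ∫ z, c0 z ∂m := rfl
  rw [hb, hc]
  linarith [hint]

lemma sum_sq_outer {k : ℕ} (x y : Fin k → ℝ) :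
    ∑ i : Fin k, ∑ j : Fin k, (x i * x j - y i * y j)^2
      = (∑ i : Fin k, x i^2)^2 + (∑ i : Fin k, y i^2)^2
        - 2*(∑ i : Fin k, x i * y i)^2 := by
  have h : ∀ i j, (x i * x j - y i * y j)^2
      = x i^2 * x j^2 + y i^2 * y j^2 - 2*((x i * y i) * (x j * y j)) := by intros; ring
  simp_rw [h, Finset.sum_sub_distrib, Finset.sum_add_distrib, ← Finset.mul_sum,
    ← Finset.sum_mul]
  ring

/-- Second-order decrease estimate for the matrix-decomposition objective: if `u, v : Z → ℝ^k`
have integrable fourth-power norms and `⟨u(z), v(z)⟩ ≥ 0` a.e., then the function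
`G(t) = (1/2)∫‖(u + t(v−u))(u + t(v−u))ᵀ − v vᵀ‖_F² dm` is twice differentiable and
`G''(0) ≤ −∫‖u uᵀ − v vᵀ‖_F² dm − 4 G'(0)`. The squared Frobenius norm is written as the
double sum of squared entries. -/
theorem matrix_decomposition_second_order_decrease {k : ℕ}
    {Z : Type*} [MeasurableSpace Z] (m : Measure Z)
    (u v : Z → EuclideanSpace ℝ (Fin k))
    (hu : Measurable u) (hv : Measurable v)
    (hu4 : Integrable (fun z => ‖u z‖ ^ 4) m)
    (hv4 : Integrable (fun z => ‖v z‖ ^ 4) m)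
    (hpos : ∀ᵐ z ∂m, 0 ≤ (inner ℝ (u z) (v z) : ℝ))
    (G : ℝ → ℝ)
    (hG : ∀ t : ℝ, G t = (1 / 2 : ℝ) *
      ∫ z, ∑ i : Fin k, ∑ j : Fin k,
        ((u z i + t * (v z i - u z i)) * (u z j + t * (v z j - u z j))
          - v z i * v z j) ^ 2 ∂m) :
    Differentiable ℝ G ∧ Differentiable ℝ (deriv G)
    ∧ deriv (deriv G) 0
        ≤ -(∫ z, ∑ i : Fin k, ∑ j : Fin k, (u z i * u z j - v z i * v z j) ^ 2 ∂m)
          - 4 * deriv G 0 := by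
  have hP : ∀ z, ‖u z‖^2 = ∑ i, u z i^2 := fun z => by
    rw [← real_inner_self_eq_norm_sq]
    simp only [PiLp.inner_apply, RCLike.inner_apply, conj_trivial, sq]
  have hQ : ∀ z, ‖v z‖^2 = ∑ i, v z i^2 := fun z => by
    rw [← real_inner_self_eq_norm_sq]
    simp only [PiLp.inner_apply, RCLike.inner_apply, conj_trivial, sq]
  have hR : ∀ z, (inner ℝ (u z) (v z) : ℝ) = ∑ i, u z i * v z i := fun z => by
    simp [PiLp.inner_apply, RCLike.inner_apply, mul_comm]
  have hpt : ∀ (t : ℝ) (z : Z),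
      (∑ i : Fin k, ∑ j : Fin k,
        ((u z i + t * (v z i - u z i)) * (u z j + t * (v z j - u z j))
          - v z i * v z j) ^ 2)
      = (‖u z‖^2 + 2*t*((inner ℝ (u z) (v z) : ℝ) - ‖u z‖^2)
            + t^2*(‖u z‖^2 + ‖v z‖^2 - 2*(inner ℝ (u z) (v z) : ℝ)))^2
          + (‖v z‖^2)^2
          - 2*((inner ℝ (u z) (v z) : ℝ) + t*(‖v z‖^2 - (inner ℝ (u z) (v z) : ℝ)))^2 := by
    intro t z
    have key := sum_sq_outer (fun i => u z i + t * (v z i - u z i)) (fun i => v z i)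
    beta_reduce at key
    have hx2 : ∑ i : Fin k, (u z i + t * (v z i - u z i))^2
        = ‖u z‖^2 + 2*t*((inner ℝ (u z) (v z) : ℝ) - ‖u z‖^2)
            + t^2*(‖u z‖^2 + ‖v z‖^2 - 2*(inner ℝ (u z) (v z) : ℝ)) := by
      rw [hP z, hQ z, hR z]
      calc ∑ i : Fin k, (u z i + t * (v z i - u z i))^2
          = ∑ i : Fin k, (u z i^2 + (2*t)*(u z i * v z i) - (2*t)*u z i^2
              + t^2*u z i^2 + t^2*v z i^2 - (2*t^2)*(u z i * v z i)) :=
            Finset.sum_congr rfl fun i _ => by ring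
        _ = _ := by
            simp only [Finset.sum_add_distrib, Finset.sum_sub_distrib, ← Finset.mul_sum]
            ring
    have hxy : ∑ i : Fin k, (u z i + t * (v z i - u z i)) * v z i
        = (inner ℝ (u z) (v z) : ℝ) + t*(‖v z‖^2 - (inner ℝ (u z) (v z) : ℝ)) := by
      rw [hQ z, hR z]
      calc ∑ i : Fin k, (u z i + t * (v z i - u z i)) * v z i
          = ∑ i : Fin k, (u z i * v z i + t*v z i^2 - t*(u z i * v z i)) :=
            Finset.sum_congr rfl fun i _ => by ring
        _ = _ := by
            simp only [Finset.sum_add_distrib, Finset.sum_sub_distrib, ← Finset.mul_sum]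
            ring
    rw [key, hx2, hxy, ← hQ z]
  have hpt0 : ∀ z : Z,
      (∑ i : Fin k, ∑ j : Fin k, (u z i * u z j - v z i * v z j) ^ 2)
      = (‖u z‖^2)^2 + (‖v z‖^2)^2 - 2*((inner ℝ (u z) (v z) : ℝ))^2 := by
    intro z
    have key := sum_sq_outer (fun i => u z i) (fun i => v z i)
    beta_reduce at key
    rw [key, ← hP z, ← hQ z, ← hR z]
  have hCS : ∀ z, ((inner ℝ (u z) (v z) : ℝ))^2 ≤ ‖u z‖^2 * ‖v z‖^2 := by
    intro z
    have h := abs_real_inner_le_norm (u z) (v z)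
    have h2 : |(inner ℝ (u z) (v z) : ℝ)|^2 ≤ (‖u z‖ * ‖v z‖)^2 :=
      pow_le_pow_left₀ (abs_nonneg _) h 2
    calc ((inner ℝ (u z) (v z) : ℝ))^2 = |(inner ℝ (u z) (v z) : ℝ)|^2 := (sq_abs _).symm
      _ ≤ (‖u z‖ * ‖v z‖)^2 := h2
      _ = ‖u z‖^2 * ‖v z‖^2 := by ring
  have hPi : Integrable (fun z => (‖u z‖^2)^2) m := by
    have hfun : (fun z => (‖u z‖^2)^2) = fun z => ‖u z‖^4 := by funext z; ring
    rw [hfun]; exact hu4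
  have hQi : Integrable (fun z => (‖v z‖^2)^2) m := by
    have hfun : (fun z => (‖v z‖^2)^2) = fun z => ‖v z‖^4 := by funext z; ring
    rw [hfun]; exact hv4
  obtain ⟨h1, h2, h3⟩ := poly_aux m (fun z => ‖u z‖^2) (fun z => ‖v z‖^2)
    (fun z => (inner ℝ (u z) (v z) : ℝ))
    (hu.norm.pow_const 2) (hv.norm.pow_const 2) (hu.inner hv)
    (fun z => by positivity) (fun z => by positivity) hCS hPi hQi hpos G
    (by
      intro t
      rw [hG t]
      congr 1
      exact integral_congr_ae (ae_of_all _ fun z => hpt t z))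
  refine ⟨h1, h2, ?_⟩
  have e0 : ∫ z, ∑ i : Fin k, ∑ j : Fin k, (u z i * u z j - v z i * v z j) ^ 2 ∂m
      = ∫ z, ((‖u z‖^2)^2 + (‖v z‖^2)^2 - 2*((inner ℝ (u z) (v z) : ℝ))^2) ∂m :=
    integral_congr_ae (ae_of_all _ hpt0)
  rw [e0]
  exact h3
end
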